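/- arXiv:1507.01548 — 3 statements merged into one kernel-verified Lean document; each statement's English description precedes it below -/
import Mathlib

section
/- Let γ₁, γ₂ > 0, γ := γ₁γ₂/(γ₁+γ₂), and let W : [0,1] → ℝ be a continuous function with W(0) = 0 and |W(s)| ≤ K·s^η for all s ∈ [0,1], for some constant K and some η ∈ (γ/γ₂, 1]. Define Γ(x;W) := (γ/γ₁)x^{−1/γ₁}{x^{1/γ}W(x^{−1/γ}) − W(1)} + (γ/(γ₁+γ₂))x^{−1/γ₁}∫₀¹ s^{−γ/γ₂−1}{x^{1/γ}W(x^{−1/γ}s) − W(s)} ds for x ≥ 1. Then ∫₁^∞ x^{−1}·Γ(x;W) dx = −γ·W(1) + (γ/(γ₁+γ₂))·∫₀¹ (γ₂ − γ₁ − γ·log s)·s^{−γ/γ₂−1}·W(s) ds, all integrals being absolutely convergent. -/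
open MeasureTheory Filter Set Real

set_option maxHeartbeats 1000000

private lemma measurable_rpow_const' (p : ℝ) : Measurable (fun x : ℝ => x ^ p) :=
  measurable_of_continuousOn_compl_singleton 0
    (fun x hx => (Real.continuousAt_rpow_const x p (Or.inl hx)).continuousWithinAt)

private lemma rpow_neg_le_rpow_neg_iff {a b p : ℝ} (ha : 0 < a) (hb : 0 < b) (hp : 0 < p) :
    a ^ (-p) ≤ b ^ (-p) ↔ b ≤ a := by
  rw [Real.rpow_neg ha.le, Real.rpow_neg hb.le,
    inv_le_inv₀ (Real.rpow_pos_of_pos ha p) (Real.rpow_pos_of_pos hb p),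
    Real.rpow_le_rpow_iff hb.le ha.le hp]

/-- integral identity `∫₁^∞ x⁻¹ Γ(x;W) dx = −γW(1) +
(γ/(γ₁+γ₂)) ∫₀¹ (γ₂−γ₁−γ log s) s^{−γ/γ₂−1} W(s) ds`, all integrals being
absolutely convergent, for any continuous `W : [0,1] → ℝ` with `W(0)=0` and
`|W(s)| ≤ K s^η` for some `η ∈ (γ/γ₂, 1]`. -/
theorem integral_of_Gamma_process
    (γ₁ γ₂ : ℝ) (hγ₁ : 0 < γ₁) (hγ₂ : 0 < γ₂)
    (γ : ℝ) (hγ : γ = γ₁ * γ₂ / (γ₁ + γ₂))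
    (W : ℝ → ℝ) (hWcont : ContinuousOn W (Set.Icc 0 1)) (hW0 : W 0 = 0)
    (K η : ℝ) (hη₁ : γ / γ₂ < η) (hη₂ : η ≤ 1)
    (hWbd : ∀ s ∈ Set.Icc (0 : ℝ) 1, |W s| ≤ K * s ^ η)
    (Γ : ℝ → ℝ)
    (hΓ : ∀ x ≥ (1 : ℝ), Γ x =
      (γ / γ₁) * x ^ (-(1 / γ₁)) * (x ^ (1 / γ) * W (x ^ (-(1 / γ))) - W 1) +
      (γ / (γ₁ + γ₂)) * x ^ (-(1 / γ₁)) *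
        ∫ s in Set.Ioc (0 : ℝ) 1,
          s ^ (-(γ / γ₂) - 1) * (x ^ (1 / γ) * W (x ^ (-(1 / γ)) * s) - W s)) :
    (∀ x ≥ (1 : ℝ), IntegrableOn
        (fun s => s ^ (-(γ / γ₂) - 1) * (x ^ (1 / γ) * W (x ^ (-(1 / γ)) * s) - W s))
        (Set.Ioc 0 1)) ∧
    IntegrableOn (fun x => x⁻¹ * Γ x) (Set.Ioi 1) ∧
    IntegrableOn (fun s => (γ₂ - γ₁ - γ * Real.log s) * s ^ (-(γ / γ₂) - 1) * W s)
      (Set.Ioc 0 1) ∧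
    (∫ x in Set.Ioi (1 : ℝ), x⁻¹ * Γ x) =
      -γ * W 1 + (γ / (γ₁ + γ₂)) *
        ∫ s in Set.Ioc (0 : ℝ) 1,
          (γ₂ - γ₁ - γ * Real.log s) * s ^ (-(γ / γ₂) - 1) * W s := by
  -- ## basic positivity and arithmetic facts
  have hsum : 0 < γ₁ + γ₂ := add_pos hγ₁ hγ₂
  have hγ0 : 0 < γ := by rw [hγ]; positivity
  have hb0 : 0 < γ / γ₂ := div_pos hγ0 hγ₂
  have hb1 : γ / γ₂ < 1 := by
    rw [hγ]; rw [div_div, div_lt_one (by positivity)]; nlinarith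
  have hη0 : 0 < η := hb0.trans hη₁
  have hK : 0 ≤ K := by
    have := hWbd 1 ⟨zero_le_one, le_refl 1⟩
    simpa using (abs_nonneg (W 1)).trans this
  have hrecip : 1 / γ = 1 / γ₁ + 1 / γ₂ := by
    rw [hγ]; field_simp; ring
  have hγprod : γ * (γ₁ + γ₂) = γ₁ * γ₂ := by
    rw [hγ]; field_simp
  -- ## the globally continuous modification `W'` and the kernel `g`
  set W' : ℝ → ℝ := fun u => W (max 0 (min 1 u)) with hW'def
  have hW'cont : Continuous W' := by
    apply hWcont.comp_continuous (continuous_const.max (continuous_const.min continuous_id))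
    exact fun u => ⟨le_max_left _ _, max_le zero_le_one (min_le_left _ _)⟩
  have hW'eq : ∀ u ∈ Icc (0:ℝ) 1, W' u = W u := by
    intro u hu
    simp only [hW'def, min_eq_right hu.2, max_eq_right hu.1]
  have hW'bd : ∀ u ∈ Icc (0:ℝ) 1, |W' u| ≤ K * u ^ η := by
    intro u hu; rw [hW'eq u hu]; exact hWbd u hu
  set g : ℝ → ℝ := fun u => u ^ (-(γ / γ₂) - 1) * W' u with hgdef
  have hgmeas : Measurable g := (measurable_rpow_const' _).mul hW'cont.measurable
  -- ## integrability engine on (0,1]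
  have hrpow_int : ∀ p : ℝ, -1 < p → IntegrableOn (fun u : ℝ => u ^ p) (Ioc 0 1) := by
    intro p hp
    exact (intervalIntegrable_iff_integrableOn_Ioc_of_le zero_le_one).mp
      (intervalIntegral.intervalIntegrable_rpow' hp)
  have hint : ∀ (q t : ℝ), 0 < t → t ≤ 1 → -1 < q + η →
      IntegrableOn (fun u => u ^ q * W' (t * u)) (Ioc 0 1) := by
    intro q t ht ht1 hq
    refine Integrable.mono' ((hrpow_int (q + η) hq).const_mul K)
      (((measurable_rpow_const' q).mul
        (hW'cont.measurable.comp (measurable_const_mul t))).aestronglyMeasurable) ?_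
    filter_upwards [self_mem_ae_restrict measurableSet_Ioc] with u hu
    have hu0 : 0 < u := hu.1
    have htu : t * u ∈ Icc (0:ℝ) 1 := ⟨by positivity, by nlinarith [hu.2]⟩
    have h1 : |W' (t * u)| ≤ K * (t * u) ^ η := hW'bd _ htu
    have h2 : (t * u) ^ η ≤ u ^ η :=
      Real.rpow_le_rpow (by positivity) (by nlinarith [hu.2]) hη0.le
    have h3 : ‖u ^ q * W' (t * u)‖ = u ^ q * |W' (t * u)| := by
      rw [norm_mul, Real.norm_eq_abs, Real.norm_eq_abs,
        abs_of_nonneg (Real.rpow_nonneg hu0.le q)]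
    rw [h3]
    calc u ^ q * |W' (t * u)| ≤ u ^ q * (K * u ^ η) := by
          refine mul_le_mul_of_nonneg_left
            (h1.trans (mul_le_mul_of_nonneg_left h2 hK)) (Real.rpow_nonneg hu0.le q)
      _ = K * u ^ (q + η) := by rw [Real.rpow_add hu0]; ring
  have hintg : IntegrableOn g (Ioc 0 1) := by
    have := hint (-(γ / γ₂) - 1) 1 one_pos le_rfl (by linarith)
    simpa using this
  have hintlog : IntegrableOn (fun u => Real.log u * g u) (Ioc 0 1) := by
    set ε : ℝ := (η - γ / γ₂) / 2 with hεdef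
    have hεp : 0 < ε := by rw [hεdef]; linarith
    refine Integrable.mono'
      ((hrpow_int (-(γ / γ₂) - 1 + (η - ε)) (by rw [hεdef]; linarith)).const_mul (K / ε))
      ((Real.measurable_log.mul hgmeas).aestronglyMeasurable) ?_
    filter_upwards [self_mem_ae_restrict measurableSet_Ioc] with u hu
    have hu0 : 0 < u := hu.1
    have hlog : |Real.log u| ≤ u ^ (-ε) / ε := by
      rw [abs_of_nonpos (Real.log_nonpos hu0.le hu.2)]
      have h1 := Real.log_le_rpow_div (inv_nonneg.mpr hu0.le) hεp
      rw [Real.log_inv, Real.inv_rpow hu0.le, ← Real.rpow_neg hu0.le] at h1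
      linarith
    have hg1 : |g u| ≤ u ^ (-(γ / γ₂) - 1) * (K * u ^ η) := by
      simp only [hgdef]
      rw [abs_mul, abs_of_nonneg (Real.rpow_nonneg hu0.le _)]
      exact mul_le_mul_of_nonneg_left (hW'bd u ⟨hu0.le, hu.2⟩)
        (Real.rpow_nonneg hu0.le _)
    have h4 : ‖Real.log u * g u‖ = |Real.log u| * |g u| := by
      rw [norm_mul, Real.norm_eq_abs, Real.norm_eq_abs]
    rw [h4]
    calc |Real.log u| * |g u| ≤ (u ^ (-ε) / ε) * (u ^ (-(γ / γ₂) - 1) * (K * u ^ η)) := by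
          exact mul_le_mul hlog hg1 (abs_nonneg _) (by positivity)
      _ = K / ε * u ^ (-(γ / γ₂) - 1 + (η - ε)) := by
          rw [show (-(γ / γ₂) - 1 + (η - ε)) = -ε + ((-(γ / γ₂) - 1) + η) by ring,
            Real.rpow_add hu0, Real.rpow_add hu0]
          ring
  -- ## part 1 : integrability of the inner integrand
  have part1 : ∀ x ≥ (1 : ℝ), IntegrableOn
      (fun s => s ^ (-(γ / γ₂) - 1) * (x ^ (1 / γ) * W (x ^ (-(1 / γ)) * s) - W s))
      (Ioc 0 1) := by
    intro x hx
    have hx0 : (0:ℝ) < x := lt_of_lt_of_le one_pos hx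
    have ht0 : 0 < x ^ (-(1 / γ)) := Real.rpow_pos_of_pos hx0 _
    have ht1 : x ^ (-(1 / γ)) ≤ 1 :=
      Real.rpow_le_one_of_one_le_of_nonpos hx (neg_nonpos.mpr (le_of_lt (one_div_pos.mpr hγ0)))
    have i1 : IntegrableOn
        (fun s => x ^ (1 / γ) * (s ^ (-(γ / γ₂) - 1) * W' (x ^ (-(1 / γ)) * s)))
        (Ioc 0 1) :=
      (hint (-(γ / γ₂) - 1) _ ht0 ht1 (by linarith)).const_mul _
    refine IntegrableOn.congr_fun (i1.sub hintg) ?_ measurableSet_Ioc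
    intro s hs
    have hs0 : 0 < s := hs.1
    have hts : x ^ (-(1 / γ)) * s ∈ Icc (0:ℝ) 1 := ⟨by positivity, by nlinarith [hs.2]⟩
    show x ^ (1 / γ) * (s ^ (-(γ / γ₂) - 1) * W' (x ^ (-(1 / γ)) * s)) - g s
        = s ^ (-(γ / γ₂) - 1) * (x ^ (1 / γ) * W (x ^ (-(1 / γ)) * s) - W s)
    rw [show W (x ^ (-(1 / γ)) * s) = W' (x ^ (-(1 / γ)) * s) from (hW'eq _ hts).symm,
      show W s = W' s from (hW'eq _ ⟨hs0.le, hs.2⟩).symm]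
    simp only [hgdef]
    ring
  -- ## the scaling substitution
  have hscale : ∀ t : ℝ, 0 < t → t ≤ 1 →
      (∫ s in Ioc (0:ℝ) 1, s ^ (-(γ / γ₂) - 1) * W' (t * s)) =
        t ^ (γ / γ₂) * ∫ u in Ioc (0:ℝ) t, g u := by
    intro t ht ht1
    have himg : (fun s : ℝ => t * s) '' Ioc (0:ℝ) 1 = Ioc 0 t := by
      rw [image_mul_left_Ioc ht 0 1, mul_zero, mul_one]
    have hderiv : ∀ s ∈ Ioc (0:ℝ) 1,
        HasDerivWithinAt (fun s : ℝ => t * s) t (Ioc (0:ℝ) 1) s := by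
      intro s _
      simpa using ((hasDerivAt_id s).const_mul t).hasDerivWithinAt
    have key := integral_image_eq_integral_abs_deriv_smul measurableSet_Ioc hderiv
      (fun a _ b _ h => mul_left_cancel₀ ht.ne' h) g
    rw [himg] at key
    have hpt : ∀ s ∈ Ioc (0:ℝ) 1,
        |t| • g (t * s) = t ^ (-(γ / γ₂)) * (s ^ (-(γ / γ₂) - 1) * W' (t * s)) := by
      intro s hs
      have hs0 : 0 < s := hs.1
      rw [smul_eq_mul, abs_of_pos ht]
      simp only [hgdef]
      have hh : t ^ (-(γ / γ₂)) = t * t ^ (-(γ / γ₂) - 1) := by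
        rw [show t ^ (-(γ / γ₂)) = t ^ (1 + (-(γ / γ₂) - 1)) from by congr 1; ring,
          Real.rpow_add ht, Real.rpow_one]
      rw [Real.mul_rpow ht.le hs0.le, hh]
      ring
    rw [setIntegral_congr_fun measurableSet_Ioc hpt, MeasureTheory.integral_const_mul] at key
    rw [key, ← mul_assoc, ← Real.rpow_add ht]
    simp
  set I₀ : ℝ := ∫ u in Ioc (0:ℝ) 1, g u with hI₀
  set IL : ℝ := ∫ u in Ioc (0:ℝ) 1, Real.log u * g u with hIL
  -- ## the inner integral identity
  have hinner : ∀ x ≥ (1:ℝ),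
      (∫ s in Ioc (0:ℝ) 1, s ^ (-(γ / γ₂) - 1) * (x ^ (1 / γ) * W (x ^ (-(1 / γ)) * s) - W s)) =
        x ^ (1 / γ₁) * (∫ u in Ioc (0:ℝ) (x ^ (-(1 / γ))), g u) - I₀ := by
    intro x hx
    have hx0 : (0:ℝ) < x := lt_of_lt_of_le one_pos hx
    have ht0 : 0 < x ^ (-(1 / γ)) := Real.rpow_pos_of_pos hx0 _
    have ht1 : x ^ (-(1 / γ)) ≤ 1 :=
      Real.rpow_le_one_of_one_le_of_nonpos hx (neg_nonpos.mpr (le_of_lt (one_div_pos.mpr hγ0)))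
    have i1 : IntegrableOn
        (fun s => x ^ (1 / γ) * (s ^ (-(γ / γ₂) - 1) * W' (x ^ (-(1 / γ)) * s)))
        (Ioc 0 1) :=
      (hint (-(γ / γ₂) - 1) _ ht0 ht1 (by linarith)).const_mul _
    have heq : EqOn
        (fun s => s ^ (-(γ / γ₂) - 1) * (x ^ (1 / γ) * W (x ^ (-(1 / γ)) * s) - W s))
        (fun s => x ^ (1 / γ) * (s ^ (-(γ / γ₂) - 1) * W' (x ^ (-(1 / γ)) * s)) - g s)
        (Ioc 0 1) := by
      intro s hs
      have hs0 : 0 < s := hs.1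
      have hts : x ^ (-(1 / γ)) * s ∈ Icc (0:ℝ) 1 := ⟨by positivity, by nlinarith [hs.2]⟩
      show s ^ (-(γ / γ₂) - 1) * (x ^ (1 / γ) * W (x ^ (-(1 / γ)) * s) - W s)
          = x ^ (1 / γ) * (s ^ (-(γ / γ₂) - 1) * W' (x ^ (-(1 / γ)) * s)) - g s
      rw [show W (x ^ (-(1 / γ)) * s) = W' (x ^ (-(1 / γ)) * s) from (hW'eq _ hts).symm,
        show W s = W' s from (hW'eq _ ⟨hs0.le, hs.2⟩).symm]
      simp only [hgdef]
      ring
    rw [setIntegral_congr_fun measurableSet_Ioc heq,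
      integral_sub i1 hintg, MeasureTheory.integral_const_mul,
      hscale _ ht0 ht1, ← mul_assoc, ← Real.rpow_mul hx0.le, ← Real.rpow_add hx0]
    have h2 : (1 / γ) * (γ / γ₂) = 1 / γ₂ := by field_simp
    rw [show 1 / γ + -(1 / γ) * (γ / γ₂) = 1 / γ₁ by
      rw [show -(1 / γ) * (γ / γ₂) = -(1 / γ * (γ / γ₂)) by ring, h2]; linarith [hrecip]]
  -- ## the four pieces
  set A : ℝ → ℝ := fun x =>
    (γ / γ₁) * (x ^ (1 / γ₂ - 1) * W' (x ^ (-(1 / γ))))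
      - (γ / γ₁) * W 1 * x ^ (-(1 / γ₁) - 1)
      + (γ / (γ₁ + γ₂)) * (x⁻¹ * ∫ u in Ioc (0:ℝ) (x ^ (-(1 / γ))), g u)
      - (γ / (γ₁ + γ₂)) * I₀ * x ^ (-(1 / γ₁) - 1) with hAdef
  have hAeq : ∀ x ∈ Ioi (1:ℝ), x⁻¹ * Γ x = A x := by
    intro x hx
    have hx1 : (1:ℝ) ≤ x := le_of_lt hx
    have hx0 : (0:ℝ) < x := lt_trans one_pos hx
    have hxc : x ^ (-(1 / γ)) ∈ Icc (0:ℝ) 1 :=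
      ⟨(Real.rpow_pos_of_pos hx0 _).le,
        Real.rpow_le_one_of_one_le_of_nonpos hx1
          (neg_nonpos.mpr (le_of_lt (one_div_pos.mpr hγ0)))⟩
    rw [hΓ x hx1, hinner x hx1]
    simp only [hAdef]
    rw [show W (x ^ (-(1 / γ))) = W' (x ^ (-(1 / γ))) from (hW'eq _ hxc).symm]
    set J := ∫ u in Ioc (0:ℝ) (x ^ (-(1 / γ))), g u with hJ
    have e1 : x ^ (1 / γ₂ - 1) = x⁻¹ * (x ^ (-(1 / γ₁)) * x ^ (1 / γ)) := by
      rw [← Real.rpow_add hx0, ← Real.rpow_neg_one x, ← Real.rpow_add hx0]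
      congr 1; linarith [hrecip]
    have e2 : x ^ (-(1 / γ₁) - 1) = x⁻¹ * x ^ (-(1 / γ₁)) := by
      rw [← Real.rpow_neg_one x, ← Real.rpow_add hx0]; congr 1; ring
    have e3 : x⁻¹ * x ^ (-(1 / γ₁)) * x ^ (1 / γ₁) = x⁻¹ := by
      rw [mul_assoc, ← Real.rpow_add hx0, show -(1 / γ₁) + 1 / γ₁ = 0 by ring,
        Real.rpow_zero, mul_one]
    rw [e1, e2]
    linear_combination (γ / (γ₁ + γ₂)) * J * e3
  -- integrability and values of the pieces
  have hexpP1 : 1 / γ₂ - 1 + -(1 / γ) * η < -1 := by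
    have h1 : γ < η * γ₂ := (div_lt_iff₀ hγ₂).mp hη₁
    have h2 : 1 / γ₂ < η / γ := (div_lt_div_iff₀ hγ₂ hγ0).mpr (by nlinarith)
    have h3 : (1 : ℝ) / γ * η = η / γ := by ring
    linarith
  have intP1 : IntegrableOn (fun x => x ^ (1 / γ₂ - 1) * W' (x ^ (-(1 / γ)))) (Ioi 1) := by
    refine Integrable.mono' ((integrableOn_Ioi_rpow_of_lt hexpP1 one_pos).const_mul K)
      (((measurable_rpow_const' _).mul
        (hW'cont.measurable.comp (measurable_rpow_const' _))).aestronglyMeasurable) ?_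
    filter_upwards [self_mem_ae_restrict measurableSet_Ioi] with x hx
    have hx0 : (0:ℝ) < x := lt_trans one_pos hx
    have hxc : x ^ (-(1 / γ)) ∈ Icc (0:ℝ) 1 :=
      ⟨(Real.rpow_pos_of_pos hx0 _).le,
        Real.rpow_le_one_of_one_le_of_nonpos hx.le
          (neg_nonpos.mpr (le_of_lt (one_div_pos.mpr hγ0)))⟩
    have h4 : ‖x ^ (1 / γ₂ - 1) * W' (x ^ (-(1 / γ)))‖
        = x ^ (1 / γ₂ - 1) * |W' (x ^ (-(1 / γ)))| := by
      rw [norm_mul, Real.norm_eq_abs, Real.norm_eq_abs,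
        abs_of_nonneg (Real.rpow_nonneg hx0.le _)]
    rw [h4]
    calc x ^ (1 / γ₂ - 1) * |W' (x ^ (-(1 / γ)))|
        ≤ x ^ (1 / γ₂ - 1) * (K * (x ^ (-(1 / γ))) ^ η) :=
          mul_le_mul_of_nonneg_left (hW'bd _ hxc) (Real.rpow_nonneg hx0.le _)
      _ = K * x ^ (1 / γ₂ - 1 + -(1 / γ) * η) := by
          rw [← Real.rpow_mul hx0.le, Real.rpow_add hx0]; ring
  have valP1 : (∫ x in Ioi (1:ℝ), x ^ (1 / γ₂ - 1) * W' (x ^ (-(1 / γ)))) = γ * I₀ := by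
    have hinv : ∀ z : ℝ, 0 < z → (z ^ (-(1 / γ))) ^ (-γ) = z := by
      intro z hz
      rw [← Real.rpow_mul hz.le, show -(1 / γ) * -γ = 1 by field_simp, Real.rpow_one]
    have himg : (fun x : ℝ => x ^ (-(1 / γ))) '' Ioi 1 = Ioo 0 1 := by
      ext u
      constructor
      · rintro ⟨x, hx, rfl⟩
        exact ⟨Real.rpow_pos_of_pos (lt_trans one_pos hx) _,
          Real.rpow_lt_one_of_one_lt_of_neg hx (neg_neg_iff_pos.mpr (one_div_pos.mpr hγ0))⟩
      · intro hu
        refine ⟨u ^ (-γ), ?_, ?_⟩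
        · exact (Real.one_lt_rpow_iff_of_pos hu.1).mpr (Or.inr ⟨hu.2, neg_neg_iff_pos.mpr hγ0⟩)
        · show (u ^ (-γ)) ^ (-(1 / γ)) = u
          rw [← Real.rpow_mul hu.1.le, show -γ * -(1 / γ) = 1 by field_simp, Real.rpow_one]
    have hderiv : ∀ x ∈ Ioi (1:ℝ), HasDerivWithinAt (fun x : ℝ => x ^ (-(1 / γ)))
        (-(1 / γ) * x ^ (-(1 / γ) - 1)) (Ioi 1) x := fun x hx =>
      (Real.hasDerivAt_rpow_const (Or.inl (lt_trans one_pos hx).ne')).hasDerivWithinAt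
    have hinj : InjOn (fun x : ℝ => x ^ (-(1 / γ))) (Ioi 1) := by
      intro a ha b hb h
      have := congrArg (fun z : ℝ => z ^ (-γ)) h
      simpa only [hinv a (lt_trans one_pos ha), hinv b (lt_trans one_pos hb)] using this
    have key := integral_image_eq_integral_abs_deriv_smul measurableSet_Ioi hderiv hinj g
    rw [himg] at key
    have hpt : ∀ x ∈ Ioi (1:ℝ), |(-(1 / γ)) * x ^ (-(1 / γ) - 1)| • g (x ^ (-(1 / γ)))
        = (1 / γ) * (x ^ (1 / γ₂ - 1) * W' (x ^ (-(1 / γ)))) := by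
      intro x hx
      have hx0 : (0:ℝ) < x := lt_trans one_pos hx
      rw [smul_eq_mul, abs_mul, abs_neg, abs_of_pos (one_div_pos.mpr hγ0),
        abs_of_pos (Real.rpow_pos_of_pos hx0 _)]
      simp only [hgdef]
      rw [← Real.rpow_mul hx0.le]
      have hxv : x ^ (-(1 / γ) - 1) * x ^ (-(1 / γ) * (-(γ / γ₂) - 1)) = x ^ (1 / γ₂ - 1) := by
        rw [← Real.rpow_add hx0]
        congr 1
        have h2 : (1 / γ) * (γ / γ₂) = 1 / γ₂ := by field_simp
        nlinarith [hrecip, h2]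
      rw [← hxv]
      ring
    rw [setIntegral_congr_fun measurableSet_Ioi hpt, MeasureTheory.integral_const_mul] at key
    rw [hI₀, integral_Ioc_eq_integral_Ioo, key]
    field_simp
  have intP2 : IntegrableOn (fun x : ℝ => x ^ (-(1 / γ₁) - 1)) (Ioi 1) :=
    integrableOn_Ioi_rpow_of_lt (by have := one_div_pos.mpr hγ₁; linarith) one_pos
  have valP2 : (∫ x in Ioi (1:ℝ), x ^ (-(1 / γ₁) - 1)) = γ₁ := by
    rw [integral_Ioi_rpow_of_lt (by have := one_div_pos.mpr hγ₁; linarith) one_pos]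
    rw [Real.one_rpow]
    field_simp
    ring
  -- ## the Fubini block
  set S : Set (ℝ × ℝ) := {p | p.1 ≤ p.2 ^ (-γ)} with hSdef
  have hSmeas : MeasurableSet S :=
    measurableSet_le measurable_fst ((measurable_rpow_const' (-γ)).comp measurable_snd)
  set f : ℝ → ℝ → ℝ := fun x u => S.indicator (fun _ => (1:ℝ)) (x, u) * (x⁻¹ * g u) with hfdef
  have hiff : ∀ x u : ℝ, 0 < x → 0 < u → (x ≤ u ^ (-γ) ↔ u ≤ x ^ (-(1 / γ))) := by
    intro x u hx0 hu0
    have e_u : (u ^ (-γ)) ^ (-(1 / γ)) = u := by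
      rw [← Real.rpow_mul hu0.le, show -γ * -(1 / γ) = 1 by field_simp, Real.rpow_one]
    have e_x : (x ^ (-(1 / γ))) ^ (-γ) = x := by
      rw [← Real.rpow_mul hx0.le, show -(1 / γ) * -γ = 1 by field_simp, Real.rpow_one]
    constructor
    · intro h
      have h2 := (rpow_neg_le_rpow_neg_iff (Real.rpow_pos_of_pos hu0 (-γ)) hx0
        (one_div_pos.mpr hγ0)).mpr h
      rwa [e_u] at h2
    · intro h
      have h2 := (rpow_neg_le_rpow_neg_iff (Real.rpow_pos_of_pos hx0 (-(1 / γ))) hu0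
        hγ0).mpr h
      rwa [e_x] at h2
  have hδ : 0 < (η - γ / γ₂) / (2 * γ) := div_pos (by linarith) (by positivity)
  set δ : ℝ := (η - γ / γ₂) / (2 * γ) with hδdef
  have hq : -1 < -(γ / γ₂) - 1 + η + -(γ * δ) := by
    have hh : γ * δ = (η - γ / γ₂) / 2 := by
      rw [hδdef]; field_simp
    linarith
  have hintf : Integrable (Function.uncurry f)
      ((volume.restrict (Ioi (1:ℝ))).prod (volume.restrict (Ioc (0:ℝ) 1))) := by
    refine Integrable.mono'
      (Integrable.mul_prod
        ((integrableOn_Ioi_rpow_of_lt (show -1 - δ < -1 by linarith) one_pos).const_mul K)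
        (hrpow_int _ hq)) ?_ ?_
    · exact ((measurable_const.indicator hSmeas).mul
        (measurable_fst.inv.mul (hgmeas.comp measurable_snd))).aestronglyMeasurable
    · rw [Measure.prod_restrict]
      filter_upwards [self_mem_ae_restrict (measurableSet_Ioi.prod measurableSet_Ioc)]
        with p hp
      obtain ⟨x, u⟩ := p
      obtain ⟨hx, hu⟩ := hp
      have hx0 : (0:ℝ) < x := lt_trans one_pos hx
      have hu0 : (0:ℝ) < u := hu.1
      by_cases hmem : (x, u) ∈ S
      · have hxu : x ≤ u ^ (-γ) := hmem
        have h5 : Function.uncurry f (x, u) = x⁻¹ * g u := by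
          simp only [hfdef, Function.uncurry, indicator_of_mem hmem, one_mul]
        have hb1' : |g u| ≤ K * u ^ (-(γ / γ₂) - 1 + η) := by
          simp only [hgdef]
          rw [abs_mul, abs_of_nonneg (Real.rpow_nonneg hu0.le _)]
          calc u ^ (-(γ / γ₂) - 1) * |W' u|
              ≤ u ^ (-(γ / γ₂) - 1) * (K * u ^ η) :=
                mul_le_mul_of_nonneg_left (hW'bd u ⟨hu0.le, hu.2⟩)
                  (Real.rpow_nonneg hu0.le _)
            _ = K * u ^ (-(γ / γ₂) - 1 + η) := by rw [Real.rpow_add hu0]; ring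
        have hx1 : x⁻¹ ≤ x ^ (-1 - δ) * u ^ (-(γ * δ)) := by
          have h6 : x ^ δ ≤ u ^ (-(γ * δ)) := by
            calc x ^ δ ≤ (u ^ (-γ)) ^ δ := Real.rpow_le_rpow hx0.le hxu hδ.le
              _ = u ^ (-(γ * δ)) := by
                  rw [← Real.rpow_mul hu0.le]; congr 1; ring
          calc x⁻¹ = x ^ (-1 - δ) * x ^ δ := by
                rw [← Real.rpow_add hx0, show -1 - δ + δ = -1 by ring, Real.rpow_neg_one]
            _ ≤ x ^ (-1 - δ) * u ^ (-(γ * δ)) :=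
                mul_le_mul_of_nonneg_left h6 (Real.rpow_nonneg hx0.le _)
        calc ‖Function.uncurry f (x, u)‖ = x⁻¹ * |g u| := by
              rw [h5, norm_mul, Real.norm_eq_abs, Real.norm_eq_abs,
                abs_of_pos (inv_pos.mpr hx0)]
          _ ≤ (x ^ (-1 - δ) * u ^ (-(γ * δ))) * (K * u ^ (-(γ / γ₂) - 1 + η)) :=
              mul_le_mul hx1 hb1' (abs_nonneg _) (by positivity)
          _ = K * x ^ (-1 - δ) * u ^ (-(γ / γ₂) - 1 + η + -(γ * δ)) := by
              rw [Real.rpow_add hu0 (-(γ / γ₂) - 1 + η) (-(γ * δ))]; ring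
      · have h5 : Function.uncurry f (x, u) = 0 := by
          simp only [hfdef, Function.uncurry, indicator_of_notMem hmem, zero_mul]
        rw [h5, norm_zero]
        exact mul_nonneg (mul_nonneg hK (Real.rpow_nonneg hx0.le _))
          (Real.rpow_nonneg hu0.le _)
  have lhs_inner : ∀ x ∈ Ioi (1:ℝ),
      (∫ u in Ioc (0:ℝ) 1, f x u) = x⁻¹ * ∫ u in Ioc (0:ℝ) (x ^ (-(1 / γ))), g u := by
    intro x hx
    have hx0 : (0:ℝ) < x := lt_trans one_pos hx
    have ht1 : x ^ (-(1 / γ)) ≤ 1 :=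
      Real.rpow_le_one_of_one_le_of_nonpos hx.le
        (neg_nonpos.mpr (le_of_lt (one_div_pos.mpr hγ0)))
    have h1 : EqOn (f x) ((Ioc (0:ℝ) (x ^ (-(1 / γ)))).indicator (fun u => x⁻¹ * g u))
        (Ioc 0 1) := by
      intro u hu
      by_cases h : x ≤ u ^ (-γ)
      · simp only [hfdef]
        rw [indicator_of_mem (show (x, u) ∈ S from h),
          indicator_of_mem (show u ∈ Ioc (0:ℝ) (x ^ (-(1 / γ))) from
            ⟨hu.1, (hiff x u hx0 hu.1).mp h⟩), one_mul]
      · simp only [hfdef]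
        rw [indicator_of_notMem (show (x, u) ∉ S from h),
          indicator_of_notMem
            (fun hm : u ∈ Ioc (0:ℝ) (x ^ (-(1 / γ))) => h ((hiff x u hx0 hu.1).mpr hm.2)),
          zero_mul]
    rw [setIntegral_congr_fun measurableSet_Ioc h1,
      MeasureTheory.integral_indicator measurableSet_Ioc,
      Measure.restrict_restrict measurableSet_Ioc,
      inter_eq_left.mpr (Ioc_subset_Ioc le_rfl ht1),
      MeasureTheory.integral_const_mul]
  have rhs_inner : ∀ u ∈ Ioc (0:ℝ) 1,
      (∫ x in Ioi (1:ℝ), f x u) = -γ * (Real.log u * g u) := by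
    intro u hu
    have hu0 : (0:ℝ) < u := hu.1
    have hge1 : (1:ℝ) ≤ u ^ (-γ) :=
      Real.one_le_rpow_of_pos_of_le_one_of_nonpos hu0 hu.2 (neg_nonpos.mpr hγ0.le)
    have h1 : EqOn (fun x => f x u)
        ((Ioc (1:ℝ) (u ^ (-γ))).indicator (fun x => x⁻¹ * g u)) (Ioi 1) := by
      intro x hx
      by_cases h : x ≤ u ^ (-γ)
      · simp only [hfdef]
        rw [indicator_of_mem (show (x, u) ∈ S from h), indicator_of_mem (show x ∈ Ioc (1:ℝ) (u ^ (-γ)) from ⟨hx, h⟩), one_mul]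
      · simp only [hfdef]
        rw [indicator_of_notMem (show (x, u) ∉ S from h),
          indicator_of_notMem (fun hm : x ∈ Ioc (1:ℝ) (u ^ (-γ)) => h hm.2), zero_mul]
    rw [setIntegral_congr_fun measurableSet_Ioi h1,
      MeasureTheory.integral_indicator measurableSet_Ioc,
      Measure.restrict_restrict measurableSet_Ioc,
      inter_eq_left.mpr (show Ioc (1:ℝ) (u ^ (-γ)) ⊆ Ioi 1 from fun y hy => hy.1),
      MeasureTheory.integral_mul_const]
    have h2 : (∫ x in Ioc (1:ℝ) (u ^ (-γ)), x⁻¹) = Real.log (u ^ (-γ)) := by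
      rw [← intervalIntegral.integral_of_le hge1,
        integral_inv_of_pos one_pos (lt_of_lt_of_le one_pos hge1), div_one]
    rw [h2, Real.log_rpow hu0]
    ring
  have intP3 : IntegrableOn (fun x : ℝ => x⁻¹ * ∫ u in Ioc (0:ℝ) (x ^ (-(1 / γ))), g u)
      (Ioi 1) := by
    have hae : (fun x => ∫ u, Function.uncurry f (x, u) ∂(volume.restrict (Ioc (0:ℝ) 1)))
        =ᵐ[volume.restrict (Ioi (1:ℝ))]
        (fun x => x⁻¹ * ∫ u in Ioc (0:ℝ) (x ^ (-(1 / γ))), g u) := by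
      filter_upwards [self_mem_ae_restrict measurableSet_Ioi] with x hx
      exact lhs_inner x hx
    exact (hintf.integral_prod_left).congr hae
  have valP3 : (∫ x in Ioi (1:ℝ), x⁻¹ * ∫ u in Ioc (0:ℝ) (x ^ (-(1 / γ))), g u) =
      -γ * IL := by
    calc (∫ x in Ioi (1:ℝ), x⁻¹ * ∫ u in Ioc (0:ℝ) (x ^ (-(1 / γ))), g u)
        = ∫ x in Ioi (1:ℝ), (∫ u in Ioc (0:ℝ) 1, f x u) :=
          setIntegral_congr_fun measurableSet_Ioi (fun x hx => (lhs_inner x hx).symm)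
      _ = ∫ u in Ioc (0:ℝ) 1, (∫ x in Ioi (1:ℝ), f x u) :=
          MeasureTheory.integral_integral_swap hintf
      _ = ∫ u in Ioc (0:ℝ) 1, -γ * (Real.log u * g u) :=
          setIntegral_congr_fun measurableSet_Ioc rhs_inner
      _ = -γ * IL := by rw [MeasureTheory.integral_const_mul, hIL]
  -- ## part 2 : integrability of x⁻¹ * Γ
  have intA : IntegrableOn A (Ioi 1) := by
    have big : IntegrableOn (fun x : ℝ =>
        (γ / γ₁) * (x ^ (1 / γ₂ - 1) * W' (x ^ (-(1 / γ))))
          - (γ / γ₁) * W 1 * x ^ (-(1 / γ₁) - 1)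
          + ((γ / (γ₁ + γ₂)) * (x⁻¹ * ∫ u in Ioc (0:ℝ) (x ^ (-(1 / γ))), g u)
          - (γ / (γ₁ + γ₂)) * I₀ * x ^ (-(1 / γ₁) - 1))) (Ioi 1) := by
      refine Integrable.add (Integrable.sub (intP1.const_mul _) ?_)
        (Integrable.sub (intP3.const_mul _) ?_)
      · exact IntegrableOn.congr_fun (intP2.const_mul ((γ / γ₁) * W 1))
          (fun x _ => by ring) measurableSet_Ioi
      · exact IntegrableOn.congr_fun (intP2.const_mul ((γ / (γ₁ + γ₂)) * I₀))
          (fun x _ => by ring) measurableSet_Ioi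
    exact IntegrableOn.congr_fun big (fun x _ => by simp only [hAdef]; ring) measurableSet_Ioi
  have part2 : IntegrableOn (fun x => x⁻¹ * Γ x) (Ioi 1) :=
    IntegrableOn.congr_fun intA (fun x hx => (hAeq x hx).symm) measurableSet_Ioi
  -- ## part 3 : integrability of the limit integrand
  have hlim_eq : EqOn (fun s => (γ₂ - γ₁ - γ * Real.log s) * s ^ (-(γ / γ₂) - 1) * W s)
      (fun s => (γ₂ - γ₁) * g s - γ * (Real.log s * g s)) (Ioc 0 1) := by
    intro s hs
    have : W s = W' s := (hW'eq s ⟨hs.1.le, hs.2⟩).symm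
    simp only [hgdef, this]; ring
  have part3 : IntegrableOn
      (fun s => (γ₂ - γ₁ - γ * Real.log s) * s ^ (-(γ / γ₂) - 1) * W s) (Ioc 0 1) := by
    exact IntegrableOn.congr_fun ((hintg.const_mul (γ₂ - γ₁)).sub (hintlog.const_mul γ))
      (fun s hs => (hlim_eq hs).symm) measurableSet_Ioc
  -- ## the final computation
  refine ⟨part1, part2, part3, ?_⟩
  have hsplit : (∫ x in Ioi (1:ℝ), x⁻¹ * Γ x) = ∫ x in Ioi (1:ℝ), A x :=
    setIntegral_congr_fun measurableSet_Ioi hAeq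
  have hAint : (∫ x in Ioi (1:ℝ), A x) =
      (γ / γ₁) * (γ * I₀) - (γ / γ₁) * W 1 * γ₁
        + (γ / (γ₁ + γ₂)) * (-γ * IL) - (γ / (γ₁ + γ₂)) * I₀ * γ₁ := by
    calc (∫ x in Ioi (1:ℝ), A x)
        = ∫ x in Ioi (1:ℝ),
            (((γ / γ₁) * (x ^ (1 / γ₂ - 1) * W' (x ^ (-(1 / γ))))
              - ((γ / γ₁) * W 1) * x ^ (-(1 / γ₁) - 1))
            + ((γ / (γ₁ + γ₂)) * (x⁻¹ * ∫ u in Ioc (0:ℝ) (x ^ (-(1 / γ))), g u)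
              - ((γ / (γ₁ + γ₂)) * I₀) * x ^ (-(1 / γ₁) - 1))) :=
          setIntegral_congr_fun measurableSet_Ioi (fun x _ => by simp only [hAdef]; ring)
      _ = (γ / γ₁) * (γ * I₀) - (γ / γ₁) * W 1 * γ₁
          + (γ / (γ₁ + γ₂)) * (-γ * IL) - (γ / (γ₁ + γ₂)) * I₀ * γ₁ := by
          have ia : IntegrableOn (fun x : ℝ =>
              (γ / γ₁) * (x ^ (1 / γ₂ - 1) * W' (x ^ (-(1 / γ))))
                - ((γ / γ₁) * W 1) * x ^ (-(1 / γ₁) - 1)) (Ioi 1) :=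
            (intP1.const_mul (γ / γ₁)).sub (intP2.const_mul ((γ / γ₁) * W 1))
          have ib : IntegrableOn (fun x : ℝ =>
              (γ / (γ₁ + γ₂)) * (x⁻¹ * ∫ u in Ioc (0:ℝ) (x ^ (-(1 / γ))), g u)
                - ((γ / (γ₁ + γ₂)) * I₀) * x ^ (-(1 / γ₁) - 1)) (Ioi 1) :=
            (intP3.const_mul (γ / (γ₁ + γ₂))).sub (intP2.const_mul ((γ / (γ₁ + γ₂)) * I₀))
          rw [integral_add ia ib,
            integral_sub (intP1.const_mul (γ / γ₁)) (intP2.const_mul ((γ / γ₁) * W 1)),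
            integral_sub (intP3.const_mul (γ / (γ₁ + γ₂)))
              (intP2.const_mul ((γ / (γ₁ + γ₂)) * I₀)),
            MeasureTheory.integral_const_mul, MeasureTheory.integral_const_mul,
            MeasureTheory.integral_const_mul, MeasureTheory.integral_const_mul,
            valP1, valP2, valP3]
          ring
  have hRHS : (∫ s in Ioc (0:ℝ) 1,
      (γ₂ - γ₁ - γ * Real.log s) * s ^ (-(γ / γ₂) - 1) * W s) =
      (γ₂ - γ₁) * I₀ - γ * IL := by
    rw [setIntegral_congr_fun measurableSet_Ioc hlim_eq]
    rw [integral_sub (hintg.const_mul _) (hintlog.const_mul _),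
      MeasureTheory.integral_const_mul, MeasureTheory.integral_const_mul]
  rw [hsplit, hAint, hRHS]
  rw [hγ]
  field_simp
  ring
end

section
/- Let (W(s))_{s∈[0,1]} be a real stochastic process on a probability space with continuous paths, E[W(s)] = 0 and E[W(s)W(t)] = min(s,t) for all s,t ∈ [0,1]. For ρ ∈ (1/2, 1), the random variable Δ₁ := ∫₀¹ s^{ρ−2} W(s) ds is a.s. defined by an absolutely convergent integral, is square-integrable, and E[Δ₁²] = 2/(ρ(2ρ−1)). -/
open MeasureTheory Filter Set Real

namespace Delta1Aux

variable {Ω : Type*} [MeasurableSpace Ω] {P : Measure Ω}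

lemma sq_integrable {f : Ω → ℝ} (hf : MemLp f 2 P) : Integrable (fun ω => f ω ^ 2) P :=
  (memLp_two_iff_integrable_sq hf.aestronglyMeasurable).mp hf

lemma mul_integrable {f g : Ω → ℝ} (hf : MemLp f 2 P) (hg : MemLp g 2 P) :
    Integrable (fun ω => f ω * g ω) P := by
  refine Integrable.mono' (((sq_integrable hf).add (sq_integrable hg)).div_const 2)
    (hf.aestronglyMeasurable.mul hg.aestronglyMeasurable)
    (Eventually.of_forall fun ω => ?_)
  show ‖f ω * g ω‖ ≤ (f ω ^ 2 + g ω ^ 2) / 2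
  rw [Real.norm_eq_abs, abs_le]
  constructor
  · nlinarith [sq_nonneg (f ω + g ω)]
  · nlinarith [sq_nonneg (f ω - g ω)]

lemma cauchy_schwarz {f g : Ω → ℝ} (hf : MemLp f 2 P) (hg : MemLp g 2 P) :
    ∫ ω, |f ω * g ω| ∂P ≤ Real.sqrt (∫ ω, f ω ^ 2 ∂P) * Real.sqrt (∫ ω, g ω ^ 2 ∂P) := by
  have hpq : Real.HolderConjugate 2 2 := ⟨by norm_num, by norm_num, by norm_num⟩
  have h2 : ENNReal.ofReal (2 : ℝ) = 2 := by norm_num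
  have H := integral_mul_norm_le_Lp_mul_Lq (μ := P) hpq (by rw [h2]; exact hf)
    (by rw [h2]; exact hg)
  have e1 : ∀ (h : Ω → ℝ), (∫ ω, ‖h ω‖ ^ (2:ℝ) ∂P) = ∫ ω, h ω ^ 2 ∂P := by
    intro h
    refine integral_congr_ae (Eventually.of_forall fun ω => ?_)
    show ‖h ω‖ ^ (2:ℝ) = h ω ^ 2
    rw [Real.rpow_two, Real.norm_eq_abs, sq_abs]
  rw [e1, e1] at H
  calc ∫ ω, |f ω * g ω| ∂P = ∫ ω, ‖f ω‖ * ‖g ω‖ ∂P := by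
        refine integral_congr_ae (Eventually.of_forall fun ω => ?_)
        show |f ω * g ω| = ‖f ω‖ * ‖g ω‖
        rw [Real.norm_eq_abs, Real.norm_eq_abs, abs_mul]
    _ ≤ (∫ ω, f ω ^ 2 ∂P) ^ ((1:ℝ)/2) * (∫ ω, g ω ^ 2 ∂P) ^ ((1:ℝ)/2) := H
    _ = Real.sqrt (∫ ω, f ω ^ 2 ∂P) * Real.sqrt (∫ ω, g ω ^ 2 ∂P) := by
        rw [Real.sqrt_eq_rpow, Real.sqrt_eq_rpow]

lemma min_le_sqrt_mul_sqrt {s t : ℝ} (hs : 0 ≤ s) (ht : 0 ≤ t) :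
    min s t ≤ Real.sqrt s * Real.sqrt t := by
  rcases le_total s t with h | h
  · calc min s t = s := min_eq_left h
      _ = Real.sqrt s * Real.sqrt s := (Real.mul_self_sqrt hs).symm
      _ ≤ Real.sqrt s * Real.sqrt t :=
          mul_le_mul_of_nonneg_left (Real.sqrt_le_sqrt h) (Real.sqrt_nonneg s)
  · calc min s t = t := min_eq_right h
      _ = Real.sqrt t * Real.sqrt t := (Real.mul_self_sqrt ht).symm
      _ ≤ Real.sqrt s * Real.sqrt t :=
          mul_le_mul_of_nonneg_right (Real.sqrt_le_sqrt h) (Real.sqrt_nonneg t)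

lemma rpow_Ioc_integrableOn {a : ℝ} (ha : -1 < a) :
    IntegrableOn (fun s : ℝ => s ^ a) (Ioc 0 1) :=
  (intervalIntegrable_iff_integrableOn_Ioc_of_le zero_le_one).mp
    (intervalIntegral.intervalIntegrable_rpow' ha)

lemma rpow_integral_Ioc {a : ℝ} (ha : -1 < a) :
    ∫ s in Ioc (0:ℝ) 1, s ^ a = 1 / (a + 1) := by
  rw [← intervalIntegral.integral_of_le zero_le_one,
    integral_rpow (Or.inl ha)]
  rw [Real.one_rpow, Real.zero_rpow (by linarith : a + 1 ≠ 0)]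
  ring

lemma measurable_rpow_c (c : ℝ) : Measurable fun x : ℝ => x ^ c :=
  measurable_of_continuousOn_compl_singleton 0
    (continuousOn_of_forall_continuousAt fun x hx => Real.continuousAt_rpow_const x c (Or.inl hx))

lemma prod_ae_mem :
    ∀ᵐ p ∂((volume.restrict (Ioc (0:ℝ) 1)).prod (volume.restrict (Ioc (0:ℝ) 1))),
      p ∈ Ioc (0:ℝ) 1 ×ˢ Ioc (0:ℝ) 1 := by
  rw [Measure.prod_restrict]
  exact ae_restrict_mem (measurableSet_Ioc.prod measurableSet_Ioc)

lemma rpow_sqrt_eq {ρ : ℝ} {u : ℝ} (hu : 0 < u) :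
    u ^ (ρ-2) * Real.sqrt u = u ^ (ρ - 3/2) := by
  rw [Real.sqrt_eq_rpow, ← Real.rpow_add hu]
  congr 1; ring

lemma inner_min_integral {ρ : ℝ} (hρ₁ : 1/2 < ρ) (hρ₂ : ρ < 1) {s : ℝ}
    (hs : s ∈ Ioc (0:ℝ) 1) :
    ∫ t in Ioc (0:ℝ) 1, t ^ (ρ-2) * min s t = s ^ ρ / ρ + (s - s ^ ρ) / (ρ - 1) := by
  have h0s : 0 < s := hs.1
  have hs1 : s ≤ 1 := hs.2
  have hρ0 : ρ ≠ 0 := by linarith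
  have hρ1 : ρ - 1 ≠ 0 := by linarith
  have e1 : EqOn (fun t : ℝ => t ^ (ρ-2) * min s t) (fun t : ℝ => t ^ (ρ-1)) (Ioc 0 s) := by
    intro t ht
    show t ^ (ρ-2) * min s t = t ^ (ρ-1)
    rw [min_eq_right ht.2, ← Real.rpow_add_one ht.1.ne']
    congr 1; ring
  have e2 : EqOn (fun t : ℝ => t ^ (ρ-2) * min s t) (fun t : ℝ => s * t ^ (ρ-2)) (Ioc s 1) := by
    intro t ht
    show t ^ (ρ-2) * min s t = s * t ^ (ρ-2)
    rw [min_eq_left ht.1.le]; ring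
  have hint1 : IntegrableOn (fun t : ℝ => t ^ (ρ-2) * min s t) (Ioc 0 s) := by
    refine IntegrableOn.congr_fun ?_ (fun t ht => (e1 ht).symm) measurableSet_Ioc
    exact (rpow_Ioc_integrableOn (by linarith : (-1:ℝ) < ρ - 1)).mono_set
      (Ioc_subset_Ioc_right hs1)
  have hint2 : IntegrableOn (fun t : ℝ => t ^ (ρ-2) * min s t) (Ioc s 1) := by
    refine IntegrableOn.congr_fun ?_ (fun t ht => (e2 ht).symm) measurableSet_Ioc
    have hc : ContinuousOn (fun t : ℝ => t ^ (ρ-2)) (Icc s 1) :=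
      ContinuousOn.rpow_const continuousOn_id
        (fun t ht => Or.inl (ne_of_gt (lt_of_lt_of_le h0s ht.1)))
    exact Integrable.const_mul (hc.integrableOn_Icc.mono_set Ioc_subset_Icc_self) s
  have i1 : ∫ t in Ioc (0:ℝ) s, t ^ (ρ-2) * min s t = s ^ ρ / ρ := by
    rw [setIntegral_congr_fun measurableSet_Ioc e1]
    rw [← intervalIntegral.integral_of_le h0s.le, integral_rpow (Or.inl (by linarith))]
    rw [Real.zero_rpow (by linarith : ρ - 1 + 1 ≠ 0)]
    rw [show ρ - 1 + 1 = ρ by ring]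
    ring
  have i2 : ∫ t in Ioc s (1:ℝ), t ^ (ρ-2) * min s t = s * ((1 - s ^ (ρ-1)) / (ρ-1)) := by
    rw [setIntegral_congr_fun measurableSet_Ioc e2, integral_const_mul]
    rw [← intervalIntegral.integral_of_le hs1, integral_rpow]
    · rw [show ρ - 2 + 1 = ρ - 1 by ring, Real.one_rpow]
    · refine Or.inr ⟨by intro h; apply hρ1; linarith, ?_⟩
      rw [Set.uIcc_of_le hs1]
      intro h
      exact absurd h.1 (not_le.mpr h0s)
  have hsplit : Ioc (0:ℝ) 1 = Ioc 0 s ∪ Ioc s 1 := (Ioc_union_Ioc_eq_Ioc h0s.le hs1).symm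
  rw [hsplit, setIntegral_union (Ioc_disjoint_Ioc_of_le le_rfl) measurableSet_Ioc hint1 hint2, i1, i2]
  have hss : s * s ^ (ρ - 1) = s ^ ρ := by
    rw [Real.rpow_sub h0s, Real.rpow_one]; field_simp
  rw [← mul_div_assoc, mul_sub, mul_one, hss]

lemma outer_integral {ρ : ℝ} (hρ₁ : 1/2 < ρ) (hρ₂ : ρ < 1) :
    ∫ s in Ioc (0:ℝ) 1, s ^ (ρ-2) * (s ^ ρ / ρ + (s - s ^ ρ) / (ρ-1))
      = 2 / (ρ * (2*ρ-1)) := by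
  have hρ0 : ρ ≠ 0 := by linarith
  have hρ1 : ρ - 1 ≠ 0 := by linarith
  have h2ρ : 2*ρ - 1 ≠ 0 := by linarith
  have e : EqOn (fun s : ℝ => s ^ (ρ-2) * (s ^ ρ / ρ + (s - s ^ ρ) / (ρ-1)))
      (fun s : ℝ => (1/ρ - 1/(ρ-1)) * s ^ (2*ρ-2) + (1/(ρ-1)) * s ^ (ρ-1)) (Ioc 0 1) := by
    intro s hs
    have h1 : s ^ (ρ-2) * s ^ ρ = s ^ (2*ρ-2) := by
      rw [← Real.rpow_add hs.1]; congr 1; ring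
    have h2 : s ^ (ρ-2) * s = s ^ (ρ-1) := by
      rw [← Real.rpow_add_one (ne_of_gt hs.1)]; congr 1; ring
    show s ^ (ρ-2) * (s ^ ρ / ρ + (s - s ^ ρ) / (ρ-1))
      = (1/ρ - 1/(ρ-1)) * s ^ (2*ρ-2) + (1/(ρ-1)) * s ^ (ρ-1)
    calc s ^ (ρ-2) * (s ^ ρ / ρ + (s - s ^ ρ) / (ρ-1))
        = (s ^ (ρ-2) * s ^ ρ)/ρ + ((s ^ (ρ-2) * s) - (s ^ (ρ-2) * s ^ ρ))/(ρ-1) := by ring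
      _ = s ^ (2*ρ-2)/ρ + (s ^ (ρ-1) - s ^ (2*ρ-2))/(ρ-1) := by rw [h1, h2]
      _ = (1/ρ - 1/(ρ-1)) * s ^ (2*ρ-2) + (1/(ρ-1)) * s ^ (ρ-1) := by
          field_simp; ring
  rw [setIntegral_congr_fun measurableSet_Ioc e]
  have ha : (-1:ℝ) < 2*ρ-2 := by linarith
  have hb : (-1:ℝ) < ρ-1 := by linarith
  rw [integral_add (((rpow_Ioc_integrableOn ha).const_mul _))
    (((rpow_Ioc_integrableOn hb).const_mul _)), integral_const_mul, integral_const_mul,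
    rpow_integral_Ioc ha, rpow_integral_Ioc hb]
  rw [show 2*ρ-2+1 = 2*ρ-1 by ring, show ρ-1+1 = ρ by ring]
  field_simp
  rw [div_add_one (by linarith : ρ * 2 - 1 ≠ 0)]
  ring

lemma K_bound {ρ : ℝ} {p : ℝ × ℝ} (h1 : p.1 ∈ Ioc (0:ℝ) 1) (h2 : p.2 ∈ Ioc (0:ℝ) 1) :
    ‖p.1 ^ (ρ-2) * p.2 ^ (ρ-2) * min p.1 p.2‖ ≤ p.1 ^ (ρ - 3/2) * p.2 ^ (ρ - 3/2) := by
  have hnn : 0 ≤ p.1 ^ (ρ-2) * p.2 ^ (ρ-2) :=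
    mul_nonneg (Real.rpow_nonneg h1.1.le _) (Real.rpow_nonneg h2.1.le _)
  rw [Real.norm_eq_abs, abs_of_nonneg (mul_nonneg hnn (le_min h1.1.le h2.1.le))]
  calc p.1 ^ (ρ-2) * p.2 ^ (ρ-2) * min p.1 p.2
      ≤ p.1 ^ (ρ-2) * p.2 ^ (ρ-2) * (Real.sqrt p.1 * Real.sqrt p.2) :=
        mul_le_mul_of_nonneg_left (min_le_sqrt_mul_sqrt h1.1.le h2.1.le) hnn
    _ = (p.1 ^ (ρ-2) * Real.sqrt p.1) * (p.2 ^ (ρ-2) * Real.sqrt p.2) := by ring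
    _ = p.1 ^ (ρ - 3/2) * p.2 ^ (ρ - 3/2) := by
        rw [rpow_sqrt_eq h1.1, rpow_sqrt_eq h2.1]

lemma double_integral {ρ : ℝ} (hρ₁ : 1/2 < ρ) (hρ₂ : ρ < 1) :
    ∫ p : ℝ × ℝ, p.1 ^ (ρ-2) * p.2 ^ (ρ-2) * min p.1 p.2
      ∂((volume.restrict (Ioc (0:ℝ) 1)).prod (volume.restrict (Ioc (0:ℝ) 1)))
      = 2 / (ρ * (2*ρ-1)) := by
  have hdom := rpow_Ioc_integrableOn (show (-1:ℝ) < ρ - 3/2 by linarith)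
  have hKmeas : AEStronglyMeasurable
      (fun p : ℝ × ℝ => p.1 ^ (ρ-2) * p.2 ^ (ρ-2) * min p.1 p.2)
      ((volume.restrict (Ioc (0:ℝ) 1)).prod (volume.restrict (Ioc (0:ℝ) 1))) := by
    apply Measurable.aestronglyMeasurable
    exact (((measurable_rpow_c (ρ-2)).comp measurable_fst).mul
      ((measurable_rpow_c (ρ-2)).comp measurable_snd)).mul
      (measurable_fst.min measurable_snd)
  have hKint : Integrable (fun p : ℝ × ℝ => p.1 ^ (ρ-2) * p.2 ^ (ρ-2) * min p.1 p.2)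
      ((volume.restrict (Ioc (0:ℝ) 1)).prod (volume.restrict (Ioc (0:ℝ) 1))) := by
    refine Integrable.mono' (hdom.mul_prod hdom) hKmeas ?_
    filter_upwards [prod_ae_mem] with p hp
    exact K_bound hp.1 hp.2
  rw [integral_prod _ hKint]
  have hinner : EqOn
      (fun s : ℝ => ∫ t in Ioc (0:ℝ) 1, s ^ (ρ-2) * t ^ (ρ-2) * min s t)
      (fun s : ℝ => s ^ (ρ-2) * (s ^ ρ / ρ + (s - s ^ ρ) / (ρ-1))) (Ioc 0 1) := by
    intro s hs
    show (∫ t in Ioc (0:ℝ) 1, s ^ (ρ-2) * t ^ (ρ-2) * min s t)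
      = s ^ (ρ-2) * (s ^ ρ / ρ + (s - s ^ ρ) / (ρ-1))
    have e : ∀ t : ℝ, s ^ (ρ-2) * t ^ (ρ-2) * min s t
        = s ^ (ρ-2) * (t ^ (ρ-2) * min s t) := fun t => by ring
    simp_rw [e]
    rw [integral_const_mul, inner_min_integral hρ₁ hρ₂ hs]
  rw [setIntegral_congr_fun measurableSet_Ioc hinner]
  exact outer_integral hρ₁ hρ₂

end Delta1Aux

/-- for ρ ∈ (1/2,1), Δ₁ := ∫₀¹ s^{ρ−2} W(s) ds is a.s. defined by an absolutely convergent integral, is square-integrable, and E[Δ₁²] = 2/(ρ(2ρ−1)). -/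
theorem delta1_second_moment
    {Ω : Type*} [MeasurableSpace Ω] (P : Measure Ω) [IsProbabilityMeasure P]
    (W : ℝ → Ω → ℝ)
    (hWmeas : ∀ s, Measurable (W s))
    (hWcont : ∀ ω, ContinuousOn (fun s => W s ω) (Set.Icc 0 1))
    (hWL2 : ∀ s ∈ Set.Icc (0 : ℝ) 1, MemLp (W s) 2 P)
    (hWmean : ∀ s ∈ Set.Icc (0 : ℝ) 1, (∫ ω, W s ω ∂P) = 0)
    (hWcov : ∀ s ∈ Set.Icc (0 : ℝ) 1, ∀ t ∈ Set.Icc (0 : ℝ) 1,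
      (∫ ω, W s ω * W t ω ∂P) = min s t)
    (ρ : ℝ) (hρ₁ : 1 / 2 < ρ) (hρ₂ : ρ < 1)
    (Δ₁ : Ω → ℝ)
    (hΔ₁ : ∀ ω, Δ₁ ω = ∫ s in Set.Ioc (0 : ℝ) 1, s ^ (ρ - 2) * W s ω)
    : (∀ᵐ ω ∂P, IntegrableOn (fun s => s ^ (ρ - 2) * W s ω) (Set.Ioc 0 1)) ∧
    MemLp Δ₁ 2 P ∧
    (∫ ω, (Δ₁ ω) ^ 2 ∂P) = 2 / (ρ * (2 * ρ - 1)) := by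
  have hIcc : Ioc (0:ℝ) 1 ⊆ Icc 0 1 := Ioc_subset_Icc_self
  set c : ℝ → ℝ := fun s => max 0 (min s 1) with hc_def
  have hc_mem : ∀ s : ℝ, c s ∈ Icc (0:ℝ) 1 :=
    fun s => ⟨le_max_left _ _, max_le zero_le_one (min_le_right _ _)⟩
  have hc_eq : ∀ s ∈ Ioc (0:ℝ) 1, c s = s := by
    intro s hs
    simp only [hc_def]
    rw [min_eq_left hs.2, max_eq_right hs.1.le]
  have hc_cont : Continuous c := continuous_const.max (continuous_id.min continuous_const)
  set V : ℝ → Ω → ℝ := fun s ω => W (c s) ω with hV_def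
  have hVunc : Measurable (Function.uncurry V) :=
    measurable_uncurry_of_continuous_of_measurable
      (fun ω => (hWcont ω).comp_continuous hc_cont (fun s => hc_mem s))
      (fun s => hWmeas (c s))
  have hVmeas : Measurable (fun q : ℝ × Ω => V q.1 q.2) := hVunc
  have hVW : ∀ s ∈ Ioc (0:ℝ) 1, V s = W s := by
    intro s hs
    funext ω
    simp only [hV_def]
    rw [hc_eq s hs]
  -- moment facts
  have hM2 : ∀ s ∈ Icc (0:ℝ) 1, ∫ ω, (W s ω) ^ 2 ∂P = s := by
    intro s hs
    have h := hWcov s hs s hs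
    rw [min_self] at h
    calc ∫ ω, (W s ω) ^ 2 ∂P = ∫ ω, W s ω * W s ω ∂P :=
          integral_congr_ae (Eventually.of_forall fun ω => by show W s ω ^ 2 = W s ω * W s ω; ring)
      _ = s := h
  have hB1 : ∀ s ∈ Icc (0:ℝ) 1, ∫ ω, |W s ω| ∂P ≤ Real.sqrt s := by
    intro s hs
    have h1 : MemLp (fun _ : Ω => (1:ℝ)) 2 P := memLp_const 1
    have hcs := Delta1Aux.cauchy_schwarz (hWL2 s hs) h1
    rw [hM2 s hs] at hcs
    have e0 : ∫ ω, ((1:ℝ)) ^ 2 ∂P = 1 := by simp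
    rw [e0, Real.sqrt_one, mul_one] at hcs
    calc ∫ ω, |W s ω| ∂P = ∫ ω, |W s ω * 1| ∂P := by simp
      _ ≤ Real.sqrt s := hcs
  have hB2 : ∀ s ∈ Icc (0:ℝ) 1, ∀ t ∈ Icc (0:ℝ) 1,
      ∫ ω, |W s ω * W t ω| ∂P ≤ Real.sqrt s * Real.sqrt t := by
    intro s hs t ht
    have hcs := Delta1Aux.cauchy_schwarz (hWL2 s hs) (hWL2 t ht)
    rwa [hM2 s hs, hM2 t ht] at hcs
  have hdom := Delta1Aux.rpow_Ioc_integrableOn (show (-1:ℝ) < ρ - 3/2 by linarith)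
  -- integrability of F on (restrict volume).prod P
  have hFmeas : Measurable (fun q : ℝ × Ω => q.1 ^ (ρ-2) * V q.1 q.2) :=
    ((Delta1Aux.measurable_rpow_c (ρ-2)).comp measurable_fst).mul hVmeas
  have hFslice : ∀ s ∈ Ioc (0:ℝ) 1, Integrable (fun ω => s ^ (ρ-2) * V s ω) P := by
    intro s hs
    rw [hVW s hs]
    exact ((hWL2 s (hIcc hs)).integrable one_le_two).const_mul _
  have hFnorm : ∀ s ∈ Ioc (0:ℝ) 1, ∫ ω, ‖s ^ (ρ-2) * V s ω‖ ∂P ≤ s ^ (ρ - 3/2) := by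
    intro s hs
    have h0 : (0:ℝ) < s := hs.1
    calc ∫ ω, ‖s ^ (ρ-2) * V s ω‖ ∂P = ∫ ω, s ^ (ρ-2) * |W s ω| ∂P := by
          rw [hVW s hs]
          refine integral_congr_ae (Eventually.of_forall fun ω => ?_)
          show ‖s ^ (ρ-2) * W s ω‖ = s ^ (ρ-2) * |W s ω|
          rw [norm_mul, Real.norm_eq_abs, Real.norm_eq_abs,
            abs_of_nonneg (Real.rpow_nonneg h0.le _)]
      _ = s ^ (ρ-2) * ∫ ω, |W s ω| ∂P := integral_const_mul _ _
      _ ≤ s ^ (ρ-2) * Real.sqrt s :=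
          mul_le_mul_of_nonneg_left (hB1 s (hIcc hs)) (Real.rpow_nonneg h0.le _)
      _ = s ^ (ρ - 3/2) := Delta1Aux.rpow_sqrt_eq h0
  have hFint : Integrable (fun q : ℝ × Ω => q.1 ^ (ρ-2) * V q.1 q.2)
      ((volume.restrict (Ioc (0:ℝ) 1)).prod P) := by
    rw [integrable_prod_iff hFmeas.aestronglyMeasurable]
    refine ⟨?_, ?_⟩
    · filter_upwards [ae_restrict_mem measurableSet_Ioc] with s hs using hFslice s hs
    · refine Integrable.mono' hdom
        (hFmeas.norm.aestronglyMeasurable.integral_prod_right') ?_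
      filter_upwards [ae_restrict_mem measurableSet_Ioc] with s hs
      rw [Real.norm_eq_abs, abs_of_nonneg (integral_nonneg fun ω => norm_nonneg _)]
      exact hFnorm s hs
  -- conclusion 1
  have hae1 : ∀ᵐ ω ∂P, IntegrableOn (fun s => s ^ (ρ - 2) * W s ω) (Ioc 0 1) := by
    filter_upwards [hFint.swap.prod_right_ae] with ω hω
    refine hω.congr ?_
    filter_upwards [ae_restrict_mem measurableSet_Ioc] with s hs
    show s ^ (ρ-2) * V s ω = s ^ (ρ-2) * W s ω
    rw [hVW s hs]
  -- integrability of G on (μ.prod μ).prod P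
  have hGmeas : Measurable (fun z : (ℝ × ℝ) × Ω =>
      (z.1.1 ^ (ρ-2) * V z.1.1 z.2) * (z.1.2 ^ (ρ-2) * V z.1.2 z.2)) := by
    have m1 : Measurable (fun z : (ℝ × ℝ) × Ω => V z.1.1 z.2) :=
      hVunc.comp (measurable_fst.fst.prodMk measurable_snd)
    have m2 : Measurable (fun z : (ℝ × ℝ) × Ω => V z.1.2 z.2) :=
      hVunc.comp (measurable_fst.snd.prodMk measurable_snd)
    exact (((Delta1Aux.measurable_rpow_c (ρ-2)).comp measurable_fst.fst).mul m1).mul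
      (((Delta1Aux.measurable_rpow_c (ρ-2)).comp measurable_fst.snd).mul m2)
  have hGslice : ∀ p : ℝ × ℝ, p ∈ Ioc (0:ℝ) 1 ×ˢ Ioc (0:ℝ) 1 →
      Integrable (fun ω => (p.1 ^ (ρ-2) * V p.1 ω) * (p.2 ^ (ρ-2) * V p.2 ω)) P := by
    rintro ⟨s, t⟩ ⟨hs, ht⟩
    have e : (fun ω => (s ^ (ρ-2) * V s ω) * (t ^ (ρ-2) * V t ω))
        = fun ω => (s ^ (ρ-2) * t ^ (ρ-2)) * (W s ω * W t ω) := by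
      rw [hVW s hs, hVW t ht]
      funext ω; ring
    rw [e]
    exact (Delta1Aux.mul_integrable (hWL2 s (hIcc hs)) (hWL2 t (hIcc ht))).const_mul _
  have hGnorm : ∀ p : ℝ × ℝ, p ∈ Ioc (0:ℝ) 1 ×ˢ Ioc (0:ℝ) 1 →
      ∫ ω, ‖(p.1 ^ (ρ-2) * V p.1 ω) * (p.2 ^ (ρ-2) * V p.2 ω)‖ ∂P
        ≤ p.1 ^ (ρ - 3/2) * p.2 ^ (ρ - 3/2) := by
    rintro ⟨s, t⟩ ⟨hs, ht⟩
    have hnn : 0 ≤ s ^ (ρ-2) * t ^ (ρ-2) :=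
      mul_nonneg (Real.rpow_nonneg hs.1.le _) (Real.rpow_nonneg ht.1.le _)
    calc ∫ ω, ‖(s ^ (ρ-2) * V s ω) * (t ^ (ρ-2) * V t ω)‖ ∂P
        = ∫ ω, (s ^ (ρ-2) * t ^ (ρ-2)) * |W s ω * W t ω| ∂P := by
          rw [hVW s hs, hVW t ht]
          refine integral_congr_ae (Eventually.of_forall fun ω => ?_)
          show ‖(s ^ (ρ-2) * W s ω) * (t ^ (ρ-2) * W t ω)‖
            = (s ^ (ρ-2) * t ^ (ρ-2)) * |W s ω * W t ω|
          rw [Real.norm_eq_abs,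
            show (s ^ (ρ-2) * W s ω) * (t ^ (ρ-2) * W t ω)
              = (s ^ (ρ-2) * t ^ (ρ-2)) * (W s ω * W t ω) by ring,
            abs_mul, abs_of_nonneg hnn]
      _ = (s ^ (ρ-2) * t ^ (ρ-2)) * ∫ ω, |W s ω * W t ω| ∂P := integral_const_mul _ _
      _ ≤ (s ^ (ρ-2) * t ^ (ρ-2)) * (Real.sqrt s * Real.sqrt t) :=
          mul_le_mul_of_nonneg_left (hB2 s (hIcc hs) t (hIcc ht)) hnn
      _ = (s ^ (ρ-2) * Real.sqrt s) * (t ^ (ρ-2) * Real.sqrt t) := by ring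
      _ = s ^ (ρ - 3/2) * t ^ (ρ - 3/2) := by
          rw [Delta1Aux.rpow_sqrt_eq hs.1, Delta1Aux.rpow_sqrt_eq ht.1]
  have hGint : Integrable (fun z : (ℝ × ℝ) × Ω =>
      (z.1.1 ^ (ρ-2) * V z.1.1 z.2) * (z.1.2 ^ (ρ-2) * V z.1.2 z.2))
      (((volume.restrict (Ioc (0:ℝ) 1)).prod (volume.restrict (Ioc (0:ℝ) 1))).prod P) := by
    rw [integrable_prod_iff hGmeas.aestronglyMeasurable]
    refine ⟨?_, ?_⟩
    · filter_upwards [Delta1Aux.prod_ae_mem] with p hp using hGslice p hp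
    · refine Integrable.mono' (hdom.mul_prod hdom)
        (hGmeas.norm.aestronglyMeasurable.integral_prod_right') ?_
      filter_upwards [Delta1Aux.prod_ae_mem] with p hp
      rw [Real.norm_eq_abs, abs_of_nonneg (integral_nonneg fun ω => norm_nonneg _)]
      exact hGnorm p hp
  -- rewriting Δ₁ via V
  have hΔV : ∀ ω, Δ₁ ω = ∫ s in Ioc (0:ℝ) 1, s ^ (ρ-2) * V s ω := by
    intro ω
    rw [hΔ₁ ω]
    refine setIntegral_congr_fun measurableSet_Ioc (fun s hs => ?_)
    show s ^ (ρ-2) * W s ω = s ^ (ρ-2) * V s ω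
    rw [hVW s hs]
  have hΔsq : ∀ ω, Δ₁ ω ^ 2
      = ∫ p : ℝ × ℝ, ((p.1 ^ (ρ-2) * V p.1 ω) * (p.2 ^ (ρ-2) * V p.2 ω))
        ∂((volume.restrict (Ioc (0:ℝ) 1)).prod (volume.restrict (Ioc (0:ℝ) 1))) := by
    intro ω
    rw [hΔV ω, sq,
      ← integral_prod_mul (μ := volume.restrict (Ioc (0:ℝ) 1))
        (ν := volume.restrict (Ioc (0:ℝ) 1))
        (fun s => s ^ (ρ-2) * V s ω) (fun t => t ^ (ρ-2) * V t ω)]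
  -- MemLp
  have hΔint : Integrable (fun ω => Δ₁ ω ^ 2) P := by
    have h := hGint.swap.integral_prod_left
    refine h.congr (Eventually.of_forall fun ω => ?_)
    exact (hΔsq ω).symm
  have hΔmeas : AEStronglyMeasurable Δ₁ P := by
    have h := hFint.swap.integral_prod_left
    refine h.aestronglyMeasurable.congr (Eventually.of_forall fun ω => ?_)
    exact (hΔV ω).symm
  -- Fubini and final computation
  have hswap : ∫ ω, Δ₁ ω ^ 2 ∂P
      = ∫ p : ℝ × ℝ, (∫ ω, (p.1 ^ (ρ-2) * V p.1 ω) * (p.2 ^ (ρ-2) * V p.2 ω) ∂P)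
        ∂((volume.restrict (Ioc (0:ℝ) 1)).prod (volume.restrict (Ioc (0:ℝ) 1))) := by
    simp_rw [hΔsq]
    exact integral_integral_swap hGint.swap
  have hfinal : ∫ ω, Δ₁ ω ^ 2 ∂P = 2 / (ρ * (2 * ρ - 1)) := by
    rw [hswap]
    have hcg : ∫ p : ℝ × ℝ, (∫ ω, (p.1 ^ (ρ-2) * V p.1 ω) * (p.2 ^ (ρ-2) * V p.2 ω) ∂P)
        ∂((volume.restrict (Ioc (0:ℝ) 1)).prod (volume.restrict (Ioc (0:ℝ) 1)))
        = ∫ p : ℝ × ℝ, p.1 ^ (ρ-2) * p.2 ^ (ρ-2) * min p.1 p.2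
        ∂((volume.restrict (Ioc (0:ℝ) 1)).prod (volume.restrict (Ioc (0:ℝ) 1))) := by
      refine integral_congr_ae ?_
      filter_upwards [Delta1Aux.prod_ae_mem] with p hp
      obtain ⟨hs, ht⟩ := hp
      have e : (fun ω => (p.1 ^ (ρ-2) * V p.1 ω) * (p.2 ^ (ρ-2) * V p.2 ω))
          = fun ω => (p.1 ^ (ρ-2) * p.2 ^ (ρ-2)) * (W p.1 ω * W p.2 ω) := by
        rw [hVW p.1 hs, hVW p.2 ht]
        funext ω; ring
      rw [e, integral_const_mul, hWcov p.1 (hIcc hs) p.2 (hIcc ht)]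
    rw [hcg]
    exact Delta1Aux.double_integral hρ₁ hρ₂
  exact ⟨hae1, (memLp_two_iff_integrable_sq hΔmeas).mpr hΔint, hfinal⟩
end

section
/- For the Burr distributions with survival functions 𝐅̄(x) = (1+x^{1/δ})^{−δ/γ₁} and 𝐆̄(x) = (1+x^{1/δ})^{−δ/γ₂} for x ≥ 0, where δ, γ₁, γ₂ > 0, the truncation probability equals p := ∫_{[0,∞)} 𝐆̄(z) dμ_𝐅(z) = γ₂/(γ₁+γ₂), where μ_𝐅 is the Lebesgue–Stieltjes measure of 𝐅 := 1 − 𝐅̄; equivalently, if 𝐗 and 𝐘 are independent random variables with distribution functions 𝐅 and 𝐆 := 1 − 𝐆̄, then P(𝐗 ≤ 𝐘) = γ₂/(γ₁+γ₂). -/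
open MeasureTheory Filter Set Real ProbabilityTheory
open Topology
lemma burrDeriv (δ γ : ℝ) (hδ : 0 < δ) (hγ : 0 < γ) {x : ℝ} (hx : 0 < x) :
    HasDerivAt (fun y : ℝ => -(1 + y ^ (1/δ)) ^ (-(δ/γ)))
      ((1/γ) * x ^ (1/δ - 1) * (1 + x ^ (1/δ)) ^ (-(δ/γ) - 1)) x := by
  have hu : (0:ℝ) < 1 + x ^ (1/δ) := by positivity
  have h1 : HasDerivAt (fun y : ℝ => 1 + y ^ (1/δ)) ((1/δ) * x ^ (1/δ - 1)) x :=
    (Real.hasDerivAt_rpow_const (Or.inl hx.ne')).const_add 1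
  have h2 : HasDerivAt (fun u : ℝ => u ^ (-(δ/γ)))
      ((-(δ/γ)) * (1 + x ^ (1/δ)) ^ (-(δ/γ) - 1)) (1 + x ^ (1/δ)) :=
    Real.hasDerivAt_rpow_const (Or.inl hu.ne')
  have h3 := (h2.comp x h1).neg
  refine HasDerivAt.congr_deriv h3 ?_
  field_simp

lemma burrCont (δ γ : ℝ) (hδ : 0 < δ) {a : ℝ} (ha : 0 ≤ a) :
    ContinuousAt (fun y : ℝ => -(1 + y ^ (1/δ)) ^ (-(δ/γ))) a := by
  have h1 : ContinuousAt (fun y : ℝ => y ^ (1/δ)) a :=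
    continuousAt_id.rpow_const (Or.inr (by positivity))
  have hu : (0:ℝ) < 1 + a ^ (1/δ) := by
    have := Real.rpow_nonneg ha (1/δ); linarith
  exact ((continuousAt_const.add h1).rpow_const (Or.inl hu.ne')).neg

lemma burrTendsto (δ γ : ℝ) (hδ : 0 < δ) (hγ : 0 < γ) :
    Tendsto (fun y : ℝ => -(1 + y ^ (1/δ)) ^ (-(δ/γ))) atTop (𝓝 0) := by
  have h1 : Tendsto (fun y : ℝ => 1 + y ^ (1/δ)) atTop atTop :=
    tendsto_atTop_add_const_left atTop 1 (tendsto_rpow_atTop (by positivity))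
  have h2 : Tendsto (fun u : ℝ => u ^ (-(δ/γ))) atTop (𝓝 0) :=
    tendsto_rpow_neg_atTop (by positivity)
  have := (h2.comp h1).neg
  simpa using this

lemma burrNonneg (δ γ : ℝ) (hδ : 0 < δ) (hγ : 0 < γ) {x : ℝ} (hx : 0 ≤ x) :
    0 ≤ (1/γ) * x ^ (1/δ - 1) * (1 + x ^ (1/δ)) ^ (-(δ/γ) - 1) := by
  have h1 : (0:ℝ) ≤ x ^ (1/δ - 1) := Real.rpow_nonneg hx _
  have h2 : (0:ℝ) ≤ 1 + x ^ (1/δ) := by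
    have := Real.rpow_nonneg hx (1/δ); linarith
  have h3 : (0:ℝ) ≤ (1 + x ^ (1/δ)) ^ (-(δ/γ) - 1) := Real.rpow_nonneg h2 _
  positivity

lemma burrIntegrable (δ γ : ℝ) (hδ : 0 < δ) (hγ : 0 < γ) {a : ℝ} (ha : 0 ≤ a) :
    IntegrableOn (fun x : ℝ => (1/γ) * x ^ (1/δ - 1) * (1 + x ^ (1/δ)) ^ (-(δ/γ) - 1))
      (Ioi a) := by
  refine integrableOn_Ioi_deriv_of_nonneg ((burrCont δ γ hδ ha).continuousWithinAt)
    (fun x hx => burrDeriv δ γ hδ hγ (lt_of_le_of_lt ha hx))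
    (fun x hx => burrNonneg δ γ hδ hγ (le_of_lt (lt_of_le_of_lt ha hx)))
    (burrTendsto δ γ hδ hγ)

lemma burrIntegral (δ γ : ℝ) (hδ : 0 < δ) (hγ : 0 < γ) {a : ℝ} (ha : 0 ≤ a) :
    ∫ x in Ioi a, (1/γ) * x ^ (1/δ - 1) * (1 + x ^ (1/δ)) ^ (-(δ/γ) - 1)
      = (1 + a ^ (1/δ)) ^ (-(δ/γ)) := by
  rw [integral_Ioi_of_hasDerivAt_of_nonneg ((burrCont δ γ hδ ha).continuousWithinAt)
    (fun x hx => burrDeriv δ γ hδ hγ (lt_of_le_of_lt ha hx))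
    (fun x hx => burrNonneg δ γ hδ hγ (le_of_lt (lt_of_le_of_lt ha hx)))
    (burrTendsto δ γ hδ hγ)]
  ring

lemma burrIntegralZero (δ γ : ℝ) (hδ : 0 < δ) (hγ : 0 < γ) :
    ∫ x in Ioi (0:ℝ), (1/γ) * x ^ (1/δ - 1) * (1 + x ^ (1/δ)) ^ (-(δ/γ) - 1) = 1 := by
  rw [burrIntegral δ γ hδ hγ le_rfl]
  rw [Real.zero_rpow (by positivity : (1:ℝ)/δ ≠ 0)]
  norm_num

noncomputable def burrDens (δ γ : ℝ) : ℝ → ENNReal := fun x =>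
  ENNReal.ofReal (if 0 < x then (1/γ) * x ^ (1/δ - 1) * (1 + x ^ (1/δ)) ^ (-(δ/γ) - 1) else 0)

lemma burrDens_meas (δ γ : ℝ) : Measurable (burrDens δ γ) := by
  apply ENNReal.measurable_ofReal.comp
  apply Measurable.ite measurableSet_Ioi _ measurable_const
  fun_prop

lemma burrMeasure_Iic (δ γ : ℝ) (hδ : 0 < δ) (hγ : 0 < γ) (b : ℝ) :
    volume.withDensity (burrDens δ γ) (Iic b)
      = ENNReal.ofReal (if 0 ≤ b then 1 - (1 + b ^ (1/δ)) ^ (-(δ/γ)) else 0) := by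
  rw [withDensity_apply _ measurableSet_Iic]
  rcases le_or_gt b 0 with hb | hb
  · have h0 : ∀ᵐ x ∂(volume.restrict (Iic b)), burrDens δ γ x = 0 := by
      rw [ae_restrict_iff' measurableSet_Iic]
      filter_upwards with x hx
      simp only [burrDens, if_neg (by linarith [mem_Iic.mp hx] : ¬ 0 < x), ENNReal.ofReal_zero]
    rw [lintegral_congr_ae h0, lintegral_zero]
    rcases lt_or_eq_of_le hb with hb' | hb'
    · rw [if_neg (not_le.mpr hb')]; simp
    · subst hb'
      rw [if_pos le_rfl, Real.zero_rpow (by positivity : (1:ℝ)/δ ≠ 0)]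
      norm_num
  · have hsplit : Iic b = Iic 0 ∪ Ioc 0 b := by
      rw [Iic_union_Ioc_eq_Iic hb.le]
    rw [hsplit, lintegral_union measurableSet_Ioc (by
      rw [Set.disjoint_left]; intro x hx hx'; exact absurd hx'.1 (not_lt.mpr (mem_Iic.mp hx)))]
    have h0 : ∫⁻ x in Iic (0:ℝ), burrDens δ γ x = 0 := by
      have h0' : ∀ᵐ x ∂(volume.restrict (Iic (0:ℝ))), burrDens δ γ x = 0 := by
        rw [ae_restrict_iff' measurableSet_Iic]
        filter_upwards with x hx
        simp only [burrDens, if_neg (not_lt.mpr (mem_Iic.mp hx)), ENNReal.ofReal_zero]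
      rw [lintegral_congr_ae h0', lintegral_zero]
    rw [h0, zero_add]
    have h1 : ∫⁻ x in Ioc (0:ℝ) b, burrDens δ γ x
        = ∫⁻ x in Ioc (0:ℝ) b,
            ENNReal.ofReal ((1/γ) * x ^ (1/δ - 1) * (1 + x ^ (1/δ)) ^ (-(δ/γ) - 1)) := by
      apply setLIntegral_congr_fun measurableSet_Ioc
      intro x hx
      simp only [burrDens, if_pos hx.1]
    rw [h1, ← ofReal_integral_eq_lintegral_ofReal
      ((burrIntegrable δ γ hδ hγ le_rfl).mono_set Ioc_subset_Ioi_self)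
      (by
        filter_upwards [ae_restrict_mem measurableSet_Ioc] with x hx
        exact burrNonneg δ γ hδ hγ hx.1.le)]
    congr 1
    have hsplit2 : Ioi (0:ℝ) = Ioc 0 b ∪ Ioi b := (Ioc_union_Ioi_eq_Ioi hb.le).symm
    have hint := burrIntegralZero δ γ hδ hγ
    rw [hsplit2, setIntegral_union (by
        rw [Set.disjoint_left]; intro x hx hx'; exact absurd hx'  (not_lt.mpr hx.2))
      measurableSet_Ioi
      ((burrIntegrable δ γ hδ hγ le_rfl).mono_set Ioc_subset_Ioi_self)
      (burrIntegrable δ γ hδ hγ hb.le)] at hint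
    rw [burrIntegral δ γ hδ hγ hb.le] at hint
    rw [if_pos hb.le]
    linarith

lemma burrMeasure_eq (δ γ : ℝ) (hδ : 0 < δ) (hγ : 0 < γ)
    (F : ℝ → ℝ)
    (hFdef : ∀ x ≥ (0 : ℝ), F x = 1 - (1 + x ^ (1 / δ)) ^ (-(δ / γ)))
    (hFneg : ∀ x < (0 : ℝ), F x = 0)
    (μ : Measure ℝ) (hμ : ∀ b, μ (Set.Iic b) = ENNReal.ofReal (F b)) :
    μ = volume.withDensity (burrDens δ γ) := by
  have hF1 : ∀ b, F b ≤ 1 := by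
    intro b
    rcases lt_or_ge b 0 with hb | hb
    · rw [hFneg b hb]; norm_num
    · rw [hFdef b hb]
      have h2 : (0:ℝ) ≤ 1 + b ^ (1/δ) := by
        have := Real.rpow_nonneg hb (1/δ); linarith
      have := Real.rpow_nonneg h2 (-(δ/γ))
      rw [one_div] at this ⊢
      linarith
  have hfin : IsFiniteMeasure μ := by
    constructor
    have huniv : (Set.univ : Set ℝ) = ⋃ n : ℕ, Iic (n:ℝ) := by
      ext x; simp only [mem_univ, mem_iUnion, mem_Iic, true_iff]
      obtain ⟨n, hn⟩ := exists_nat_ge x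
      exact ⟨n, hn⟩
    rw [huniv, Directed.measure_iUnion (Monotone.directed_le (fun m n hmn => Iic_subset_Iic.mpr (by exact_mod_cast hmn)))]
    have : ⨆ n : ℕ, μ (Iic (n:ℝ)) ≤ 1 := by
      refine iSup_le fun n => ?_
      rw [hμ]
      calc ENNReal.ofReal (F n) ≤ ENNReal.ofReal 1 := ENNReal.ofReal_le_ofReal (hF1 _)
        _ = 1 := ENNReal.ofReal_one
    exact lt_of_le_of_lt this ENNReal.one_lt_top
  refine Measure.ext_of_Iic μ _ fun b => ?_
  rw [hμ, burrMeasure_Iic δ γ hδ hγ]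
  rcases lt_or_ge b 0 with hb | hb
  · rw [if_neg (not_le.mpr hb), hFneg b hb]
  · rw [if_pos hb, hFdef b hb]

lemma burrMeasure_prob (δ γ : ℝ) (hδ : 0 < δ) (hγ : 0 < γ) :
    IsProbabilityMeasure (volume.withDensity (burrDens δ γ)) := by
  constructor
  have : (Set.univ : Set ℝ) = Iic (0:ℝ) ∪ Ioi 0 := by
    ext x; simp [le_or_gt]
  rw [this, measure_union (by rw [Set.disjoint_left]; intro x hx hx'; exact absurd (mem_Ioi.mp hx') (not_lt.mpr (mem_Iic.mp hx))) measurableSet_Ioi]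
  have h1 : volume.withDensity (burrDens δ γ) (Iic 0) = 0 := by
    rw [burrMeasure_Iic δ γ hδ hγ, if_pos le_rfl,
      Real.zero_rpow (by positivity : (1:ℝ)/δ ≠ 0)]
    norm_num
  have h2 : volume.withDensity (burrDens δ γ) (Ioi 0) = 1 := by
    rw [withDensity_apply _ measurableSet_Ioi]
    have : ∫⁻ x in Ioi (0:ℝ), burrDens δ γ x
        = ∫⁻ x in Ioi (0:ℝ),
            ENNReal.ofReal ((1/γ) * x ^ (1/δ - 1) * (1 + x ^ (1/δ)) ^ (-(δ/γ) - 1)) := by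
      apply setLIntegral_congr_fun measurableSet_Ioi
      intro x hx
      simp only [burrDens, if_pos (mem_Ioi.mp hx)]
    rw [this, ← ofReal_integral_eq_lintegral_ofReal (burrIntegrable δ γ hδ hγ le_rfl)
      (by
        filter_upwards [ae_restrict_mem measurableSet_Ioi] with x hx
        exact burrNonneg δ γ hδ hγ (le_of_lt hx)),
      burrIntegralZero δ γ hδ hγ]
    exact ENNReal.ofReal_one
  rw [h1, h2, zero_add]

lemma burrPointwise (δ γ₁ γ₂ : ℝ) (hδ : 0 < δ) (hγ₁ : 0 < γ₁) (hγ₂ : 0 < γ₂)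
    {x : ℝ} (hx : 0 < x) :
    ((1/γ₁) * x ^ (1/δ - 1) * (1 + x ^ (1/δ)) ^ (-(δ/γ₁) - 1))
      * ((1 + x ^ (1/δ)) ^ (-(δ/γ₂)))
    = (γ₂/(γ₁+γ₂)) * ((1/(γ₁*γ₂/(γ₁+γ₂))) * x ^ (1/δ - 1)
        * (1 + x ^ (1/δ)) ^ (-(δ/(γ₁*γ₂/(γ₁+γ₂))) - 1)) := by
  have hu : (0:ℝ) < 1 + x ^ (1/δ) := by positivity
  have hrw : (1 + x ^ (1/δ)) ^ (-(δ/γ₁) - 1) * (1 + x ^ (1/δ)) ^ (-(δ/γ₂))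
      = (1 + x ^ (1/δ)) ^ (-(δ/(γ₁*γ₂/(γ₁+γ₂))) - 1) := by
    rw [← Real.rpow_add hu]
    congr 1
    field_simp
    ring
  have hc : (1:ℝ)/γ₁ = (γ₂/(γ₁+γ₂)) * (1/(γ₁*γ₂/(γ₁+γ₂))) := by
    field_simp
  calc ((1/γ₁) * x ^ (1/δ - 1) * (1 + x ^ (1/δ)) ^ (-(δ/γ₁) - 1))
      * ((1 + x ^ (1/δ)) ^ (-(δ/γ₂)))
      = (1/γ₁) * x ^ (1/δ - 1)
        * ((1 + x ^ (1/δ)) ^ (-(δ/γ₁) - 1) * (1 + x ^ (1/δ)) ^ (-(δ/γ₂))) := by ring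
    _ = (1/γ₁) * x ^ (1/δ - 1) * (1 + x ^ (1/δ)) ^ (-(δ/(γ₁*γ₂/(γ₁+γ₂))) - 1) := by rw [hrw]
    _ = _ := by rw [hc]; ring

lemma burrKey (δ γ₁ γ₂ : ℝ) (hδ : 0 < δ) (hγ₁ : 0 < γ₁) (hγ₂ : 0 < γ₂)
    (GG : ℝ → ℝ)
    (hGGdef : ∀ x ≥ (0 : ℝ), GG x = 1 - (1 + x ^ (1 / δ)) ^ (-(δ / γ₂)))
    (hGGm : Measurable GG) :
    ∫⁻ x in Ici (0:ℝ), ENNReal.ofReal (1 - GG x) ∂(volume.withDensity (burrDens δ γ₁))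
      = ENNReal.ofReal (γ₂/(γ₁+γ₂)) := by
  set γ := γ₁*γ₂/(γ₁+γ₂) with hγdef
  have hγ : 0 < γ := by positivity
  rw [restrict_withDensity measurableSet_Ici,
    lintegral_withDensity_eq_lintegral_mul _ (burrDens_meas δ γ₁)
      (g := fun x => ENNReal.ofReal (1 - GG x)) ((measurable_const.sub hGGm).ennreal_ofReal)]
  have hIoi : (volume.restrict (Ici (0:ℝ))) = volume.restrict (Ioi 0) :=
    (Measure.restrict_congr_set Ioi_ae_eq_Ici).symm
  rw [hIoi]
  have hcongr : ∫⁻ x in Ioi (0:ℝ), (burrDens δ γ₁ * fun x => ENNReal.ofReal (1 - GG x)) x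
      = ∫⁻ x in Ioi (0:ℝ),
          ENNReal.ofReal ((γ₂/(γ₁+γ₂)) * ((1/γ) * x ^ (1/δ - 1) * (1 + x ^ (1/δ)) ^ (-(δ/γ) - 1))) := by
    apply setLIntegral_congr_fun measurableSet_Ioi
    intro x hx
    have hx' : (0:ℝ) < x := mem_Ioi.mp hx
    simp only [Pi.mul_apply, burrDens, if_pos hx']
    rw [← ENNReal.ofReal_mul (burrNonneg δ γ₁ hδ hγ₁ hx'.le)]
    congr 1
    rw [hGGdef x hx'.le]
    have : (1:ℝ) - (1 - (1 + x ^ (1/δ)) ^ (-(δ/γ₂))) = (1 + x ^ (1/δ)) ^ (-(δ/γ₂)) := by ring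
    rw [this, burrPointwise δ γ₁ γ₂ hδ hγ₁ hγ₂ hx']
  rw [hcongr, ← ofReal_integral_eq_lintegral_ofReal
    ((burrIntegrable δ γ hδ hγ le_rfl).const_mul _)
    (by
      filter_upwards [ae_restrict_mem measurableSet_Ioi] with x hx
      exact mul_nonneg (by positivity) (burrNonneg δ γ hδ hγ (le_of_lt hx))),
    integral_const_mul, burrIntegralZero δ γ hδ hγ, mul_one]

/-- For Burr distributions `𝐅̄(x) = (1+x^{1/δ})^{−δ/γ₁}`,
`𝐆̄(x) = (1+x^{1/δ})^{−δ/γ₂}` (`x ≥ 0`, `δ, γ₁, γ₂ > 0`), the truncation probability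
equals `p = ∫_{[0,∞)} 𝐆̄ dμ_𝐅 = γ₂/(γ₁+γ₂)`; equivalently, if `𝐗 ⟂ 𝐘` have dfs `𝐅`, `𝐆`
then `P(𝐗 ≤ 𝐘) = γ₂/(γ₁+γ₂)`. -/
theorem burr_truncation_probability
    (δ γ₁ γ₂ : ℝ) (hδ : 0 < δ) (hγ₁ : 0 < γ₁) (hγ₂ : 0 < γ₂)
    (FF GG : ℝ → ℝ)
    (hFFdef : ∀ x ≥ (0 : ℝ), FF x = 1 - (1 + x ^ (1 / δ)) ^ (-(δ / γ₁)))
    (hFFneg : ∀ x < (0 : ℝ), FF x = 0)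
    (hGGdef : ∀ x ≥ (0 : ℝ), GG x = 1 - (1 + x ^ (1 / δ)) ^ (-(δ / γ₂)))
    (hGGneg : ∀ x < (0 : ℝ), GG x = 0)
    (μF μG : Measure ℝ)
    (hμF : ∀ b, μF (Set.Iic b) = ENNReal.ofReal (FF b))
    (hμG : ∀ b, μG (Set.Iic b) = ENNReal.ofReal (GG b)) :
    (∫ z in Set.Ici (0 : ℝ), (1 - GG z) ∂μF) = γ₂ / (γ₁ + γ₂) ∧
    ∀ (Ω : Type) (_ : MeasurableSpace Ω) (P : Measure Ω), IsProbabilityMeasure P →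
      ∀ X Y : Ω → ℝ, Measurable X → Measurable Y → IndepFun X Y P →
        Measure.map X P = μF → Measure.map Y P = μG →
        P {ω | X ω ≤ Y ω} = ENNReal.ofReal (γ₂ / (γ₁ + γ₂)) := by
  have hGGfun : GG = fun x => if 0 ≤ x then 1 - (1 + x ^ (1 / δ)) ^ (-(δ / γ₂)) else 0 := by
    funext x
    by_cases h : 0 ≤ x
    · rw [if_pos h]; exact hGGdef x h
    · rw [if_neg h]; exact hGGneg x (lt_of_not_ge h)
  have hGGm : Measurable GG := by
    rw [hGGfun]
    exact Measurable.ite measurableSet_Ici (by fun_prop) measurable_const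
  have hFeq : μF = volume.withDensity (burrDens δ γ₁) :=
    burrMeasure_eq δ γ₁ hδ hγ₁ FF hFFdef hFFneg μF hμF
  have hGeq : μG = volume.withDensity (burrDens δ γ₂) :=
    burrMeasure_eq δ γ₂ hδ hγ₂ GG hGGdef hGGneg μG hμG
  haveI instF : IsProbabilityMeasure μF := by rw [hFeq]; exact burrMeasure_prob δ γ₁ hδ hγ₁
  haveI instG : IsProbabilityMeasure μG := by rw [hGeq]; exact burrMeasure_prob δ γ₂ hδ hγ₂
  -- bounds for GG on [0,∞)
  have hGGbd : ∀ x ≥ (0:ℝ), 0 ≤ GG x ∧ GG x ≤ 1 := by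
    intro x hx
    rw [hGGdef x hx]
    have h1 : (1:ℝ) ≤ 1 + x ^ (1/δ) := by
      have := Real.rpow_nonneg hx (1/δ); linarith
    have h2 : (1 + x ^ (1/δ)) ^ (-(δ/γ₂)) ≤ 1 :=
      Real.rpow_le_one_of_one_le_of_nonpos h1 (neg_nonpos.mpr (le_of_lt (by positivity)))
    have h3 : (0:ℝ) ≤ (1 + x ^ (1/δ)) ^ (-(δ/γ₂)) := Real.rpow_nonneg (by linarith) _
    rw [one_div] at *
    constructor <;> linarith
  -- the key lintegral
  have L : ∫⁻ x in Ici (0:ℝ), ENNReal.ofReal (1 - GG x) ∂μF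
      = ENNReal.ofReal (γ₂/(γ₁+γ₂)) := by
    rw [hFeq]
    exact burrKey δ γ₁ γ₂ hδ hγ₁ hγ₂ GG hGGdef hGGm
  constructor
  · have hnn : 0 ≤ᵐ[μF.restrict (Ici 0)] fun z => 1 - GG z := by
      filter_upwards [ae_restrict_mem measurableSet_Ici] with x hx
      have := (hGGbd x hx).2
      simp only [Pi.zero_apply]
      linarith
    rw [integral_eq_lintegral_of_nonneg_ae hnn
      ((measurable_const.sub hGGm).aestronglyMeasurable), L,
      ENNReal.toReal_ofReal (by positivity)]
  · intro Ω mΩ P hP X Y hX hY hind hmX hmY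
    have hmap : P.map (fun ω => (X ω, Y ω)) = μF.prod μG := by
      rw [← hmX, ← hmY]
      exact (indepFun_iff_map_prod_eq_prod_map_map hX.aemeasurable hY.aemeasurable).mp hind
    have hset : MeasurableSet {p : ℝ × ℝ | p.1 ≤ p.2} :=
      measurableSet_le measurable_fst measurable_snd
    have hPP : P {ω | X ω ≤ Y ω} = (μF.prod μG) {p : ℝ × ℝ | p.1 ≤ p.2} := by
      rw [← hmap, Measure.map_apply (hX.prodMk hY) hset]
      rfl
    rw [hPP, Measure.prod_apply hset]
    have hpre : ∀ x : ℝ, (Prod.mk x ⁻¹' {p : ℝ × ℝ | p.1 ≤ p.2}) = Ici x := fun x => rfl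
    simp_rw [hpre]
    have hsing : ∀ x : ℝ, μG {x} = 0 := by
      intro x
      rw [hGeq, withDensity_apply _ (measurableSet_singleton x),
        Measure.restrict_eq_zero.mpr (Real.volume_singleton), lintegral_zero_measure]
    have hIio : ∀ x : ℝ, μG (Iio x) = ENNReal.ofReal (GG x) := by
      intro x
      have hd : Iic x = Iio x ∪ {x} := by
        ext y; simp [le_iff_lt_or_eq]
      have := hμG x
      rw [hd, measure_union (by simp [Set.disjoint_left]; exact fun a ha => ne_of_lt ha) (measurableSet_singleton x),
        hsing, add_zero] at this
      exact this
    have hIci : ∀ x : ℝ, μG (Ici x) = 1 - ENNReal.ofReal (GG x) := by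
      intro x
      rw [← compl_Iio, measure_compl measurableSet_Iio (measure_ne_top _ _),
        measure_univ, hIio]
    have hF0 : μF (Iio (0:ℝ)) = 0 := by
      have h1 : μF (Iio (0:ℝ)) ≤ μF (Iic 0) := measure_mono Iio_subset_Iic_self
      have h2 : μF (Iic (0:ℝ)) = 0 := by
        rw [hμF, hFFdef 0 le_rfl, Real.zero_rpow (by positivity : (1:ℝ)/δ ≠ 0)]
        norm_num
      exact le_antisymm (h2 ▸ h1) zero_le
    have hsplit : ∫⁻ x, μG (Ici x) ∂μF = ∫⁻ x in Ici 0, μG (Ici x) ∂μF := by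
      rw [← lintegral_add_compl (fun x => μG (Ici x)) (measurableSet_Ici (a := (0:ℝ))) (μ := μF),
        compl_Ici, Measure.restrict_eq_zero.mpr hF0, lintegral_zero_measure, add_zero]
    rw [hsplit]
    have hcongr : ∫⁻ x in Ici (0:ℝ), μG (Ici x) ∂μF
        = ∫⁻ x in Ici (0:ℝ), ENNReal.ofReal (1 - GG x) ∂μF := by
      apply setLIntegral_congr_fun measurableSet_Ici
      intro x hx
      beta_reduce
      rw [hIci x, ENNReal.ofReal_sub _ (hGGbd x hx).1, ENNReal.ofReal_one]
    rw [hcongr, L]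
end
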